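/- arXiv:2105.02695 — 7 statements merged into one kernel-verified Lean document; each statement's English description precedes it below -/
import Mathlib

section
/- Lemma (squared-weight bound): for every β > 0 and all v, w ∈ ℝ^d, ( γ_β(v,w) )² ≤ ξ_β · γ_{2β}(v,w), where ξ_β := (1 + exp(−2β(𝓔̄ − 𝓔̲)))/(1 + exp(−β(𝓔̄ − 𝓔̲)))². -/
/-- Squared-weight bound: `(γ_β(v,w))² ≤ ξ_β · γ_{2β}(v,w)`. -/
theorem squared_weight_bound {d : ℕ} (hd : 1 ≤ d)
    (𝓔 : EuclideanSpace ℝ (Fin d) → ℝ)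
    (hbA : BddAbove (Set.range 𝓔)) (hbB : BddBelow (Set.range 𝓔))
    (β : ℝ) (hβ : 0 < β) (v w : EuclideanSpace ℝ (Fin d)) :
    let γ : ℝ → EuclideanSpace ℝ (Fin d) → EuclideanSpace ℝ (Fin d) → ℝ :=
      fun b x y => Real.exp (-b * 𝓔 y) / (Real.exp (-b * 𝓔 x) + Real.exp (-b * 𝓔 y))
    let Einf := sInf (Set.range 𝓔)
    let Esup := sSup (Set.range 𝓔)
    let ξβ := (1 + Real.exp (-2 * β * (Esup - Einf))) /
      (1 + Real.exp (-β * (Esup - Einf))) ^ 2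
    (γ β v w) ^ 2 ≤ ξβ * γ (2 * β) v w := by
  intro γ Einf Esup ξβ
  have hav : 𝓔 v ≤ Esup := le_csSup hbA ⟨v, rfl⟩
  have hbw : 𝓔 w ≤ Esup := le_csSup hbA ⟨w, rfl⟩
  have hai : Einf ≤ 𝓔 v := csInf_le hbB ⟨v, rfl⟩
  have hbi : Einf ≤ 𝓔 w := csInf_le hbB ⟨w, rfl⟩
  set a := 𝓔 v with ha
  set b := 𝓔 w with hb
  set e1 := Real.exp (-β * a) with he1def
  set e2 := Real.exp (-β * b) with he2def
  set q := Real.exp (-β * (Esup - Einf)) with hqdef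
  have he1 : 0 < e1 := Real.exp_pos _
  have he2 : 0 < e2 := Real.exp_pos _
  have hq0 : 0 < q := Real.exp_pos _
  have h1 : q * e1 ≤ e2 := by
    rw [hqdef, he1def, he2def, ← Real.exp_add]
    exact Real.exp_le_exp.mpr (by nlinarith)
  have h2 : q * e2 ≤ e1 := by
    rw [hqdef, he1def, he2def, ← Real.exp_add]
    exact Real.exp_le_exp.mpr (by nlinarith)
  have hEa : Real.exp (-(2 * β) * a) = e1 ^ 2 := by
    rw [he1def, show (-(2 * β) * a) = (-β * a) + (-β * a) by ring, Real.exp_add]; ring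
  have hEb : Real.exp (-(2 * β) * b) = e2 ^ 2 := by
    rw [he2def, show (-(2 * β) * b) = (-β * b) + (-β * b) by ring, Real.exp_add]; ring
  have hQ : Real.exp (-2 * β * (Esup - Einf)) = q ^ 2 := by
    rw [hqdef, show (-2 * β * (Esup - Einf)) = (-β * (Esup - Einf)) + (-β * (Esup - Einf)) by ring,
      Real.exp_add]; ring
  show (e2 / (e1 + e2)) ^ 2 ≤ ξβ *
    (Real.exp (-(2 * β) * b) / (Real.exp (-(2 * β) * a) + Real.exp (-(2 * β) * b)))
  have hxi : ξβ = (1 + q ^ 2) / (1 + q) ^ 2 := by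
    show (1 + Real.exp (-2 * β * (Esup - Einf))) / (1 + Real.exp (-β * (Esup - Einf))) ^ 2 = _
    rw [hQ, ← hqdef]
  rw [hEa, hEb, hxi]
  rw [div_pow, div_mul_div_comm, div_le_div_iff₀ (by positivity) (by positivity)]
  nlinarith [mul_nonneg (mul_nonneg (sub_nonneg.mpr h1) (sub_nonneg.mpr h2)) (sq_nonneg e2),
    sq_nonneg e2, he1.le, he2.le, hq0.le]
end

section
/- Bound on the quadratic alignment term: for every β > 0, ∫∫ ( γ_β(v,v_*) )² ‖v − v_*‖² dμ(v) dμ(v_*) ≤ ∫ ‖v − m‖² dμ(v). -/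
open MeasureTheory

set_option maxHeartbeats 1000000 in
/-- Bound on the quadratic alignment term:
`∫∫ (γ_β(v,v_*))² ‖v - v_*‖² dμ dμ ≤ ∫ ‖v - m‖² dμ`. -/
theorem quadratic_alignment_bound {d : ℕ} (hd : 1 ≤ d)
    (μ : Measure (EuclideanSpace ℝ (Fin d))) [IsProbabilityMeasure μ]
    (𝓔 : EuclideanSpace ℝ (Fin d) → ℝ) (h𝓔 : Measurable 𝓔)
    (hmom : Integrable (fun v => ‖v‖ ^ 2) μ)
    (β : ℝ) (hβ : 0 < β) :
    let γ : EuclideanSpace ℝ (Fin d) → EuclideanSpace ℝ (Fin d) → ℝ :=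
      fun x y => Real.exp (-β * 𝓔 y) / (Real.exp (-β * 𝓔 x) + Real.exp (-β * 𝓔 y))
    let m := ∫ v, v ∂μ
    (∫ v, ∫ w, (γ v w) ^ 2 * ‖v - w‖ ^ 2 ∂μ ∂μ) ≤ ∫ v, ‖v - m‖ ^ 2 ∂μ := by
  intro γ m
  -- basic facts about γ
  have hγpos : ∀ v w : EuclideanSpace ℝ (Fin d), 0 < γ v w := by
    intro v w
    simp only [γ]
    positivity
  have hγle : ∀ v w : EuclideanSpace ℝ (Fin d), γ v w ≤ 1 := by
    intro v w
    simp only [γ]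
    rw [div_le_one (by positivity)]
    nlinarith [Real.exp_pos (-β * 𝓔 v)]
  have hγsum : ∀ v w : EuclideanSpace ℝ (Fin d), γ v w + γ w v = 1 := by
    intro v w
    have h1 : Real.exp (-β * 𝓔 v) + Real.exp (-β * 𝓔 w) ≠ 0 := by positivity
    simp only [γ]
    rw [add_comm (Real.exp (-β * 𝓔 w)) (Real.exp (-β * 𝓔 v))]
    field_simp
    ring
  -- measurability of γ as a function on the product
  have hγmeas : Measurable (fun p : EuclideanSpace ℝ (Fin d) × EuclideanSpace ℝ (Fin d) =>
      γ p.1 p.2) := by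
    simp only [γ]
    apply Measurable.div
    · exact Real.measurable_exp.comp ((measurable_const.mul h𝓔).comp measurable_snd)
    · exact (Real.measurable_exp.comp ((measurable_const.mul h𝓔).comp measurable_fst)).add
        (Real.measurable_exp.comp ((measurable_const.mul h𝓔).comp measurable_snd))
  -- integrability of the identity
  have hid : Integrable (fun v : EuclideanSpace ℝ (Fin d) => v) μ := by
    have h2 : MemLp (fun v : EuclideanSpace ℝ (Fin d) => v) 2 μ :=
      (memLp_two_iff_integrable_sq_norm aestronglyMeasurable_id).mpr hmom
    exact h2.integrable (by norm_num)
  -- lift integrability to the product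
  have hfstmom : Integrable (fun p : EuclideanSpace ℝ (Fin d) × EuclideanSpace ℝ (Fin d) =>
      ‖p.1‖ ^ 2) (μ.prod μ) := by
    have h : (μ.prod μ).map Prod.fst = μ := by simp
    have hmom' := hmom
    rw [show μ = (μ.prod μ).map Prod.fst from h.symm] at hmom'
    exact (integrable_map_measure hmom'.aestronglyMeasurable measurable_fst.aemeasurable).mp hmom'
  have hsndmom : Integrable (fun p : EuclideanSpace ℝ (Fin d) × EuclideanSpace ℝ (Fin d) =>
      ‖p.2‖ ^ 2) (μ.prod μ) := by
    have h : (μ.prod μ).map Prod.snd = μ := by simp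
    have hmom' := hmom
    rw [show μ = (μ.prod μ).map Prod.snd from h.symm] at hmom'
    exact (integrable_map_measure hmom'.aestronglyMeasurable measurable_snd.aemeasurable).mp hmom'
  -- integrability of G p = ‖p.1 - p.2‖²
  have hG_int : Integrable (fun p : EuclideanSpace ℝ (Fin d) × EuclideanSpace ℝ (Fin d) =>
      ‖p.1 - p.2‖ ^ 2) (μ.prod μ) := by
    apply Integrable.mono' (((hfstmom.const_mul 2)).add (hsndmom.const_mul 2))
    · exact (continuous_fst.sub continuous_snd).norm.pow 2 |>.aestronglyMeasurable
    · filter_upwards with p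
      have h1 : ‖p.1 - p.2‖ ≤ ‖p.1‖ + ‖p.2‖ := norm_sub_le _ _
      have h2 : (0:ℝ) ≤ ‖p.1 - p.2‖ := norm_nonneg _
      have h4 : ‖p.1 - p.2‖ ^ 2 ≤ (‖p.1‖ + ‖p.2‖) ^ 2 := by
        nlinarith [norm_nonneg p.1, norm_nonneg p.2]
      rw [Real.norm_eq_abs, abs_of_nonneg (by positivity)]
      simp only [Pi.add_apply]
      nlinarith [sq_nonneg (‖p.1‖ - ‖p.2‖)]
  -- integrability of F p = γ(p.1,p.2)² ‖p.1 - p.2‖²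
  have hF_int : Integrable (fun p : EuclideanSpace ℝ (Fin d) × EuclideanSpace ℝ (Fin d) =>
      (γ p.1 p.2) ^ 2 * ‖p.1 - p.2‖ ^ 2) (μ.prod μ) := by
    apply Integrable.mono' hG_int
    · exact ((hγmeas.pow_const 2).mul
        (((continuous_fst.sub continuous_snd).norm.pow 2).measurable)).aestronglyMeasurable
    · filter_upwards with p
      have h1 := hγpos p.1 p.2
      have h2 := hγle p.1 p.2
      have h3 : (0:ℝ) ≤ ‖p.1 - p.2‖ ^ 2 := by positivity
      rw [Real.norm_eq_abs, abs_of_nonneg (by positivity)]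
      nlinarith [mul_le_mul_of_nonneg_right (mul_le_one₀ h2 h1.le h2) h3]
  -- rewrite LHS as an integral over the product
  have hLHS : (∫ v, ∫ w, (γ v w) ^ 2 * ‖v - w‖ ^ 2 ∂μ ∂μ)
      = ∫ p : EuclideanSpace ℝ (Fin d) × EuclideanSpace ℝ (Fin d),
          (γ p.1 p.2) ^ 2 * ‖p.1 - p.2‖ ^ 2 ∂(μ.prod μ) :=
    integral_integral hF_int
  -- swap symmetry
  have hswap_int : Integrable (fun p : EuclideanSpace ℝ (Fin d) × EuclideanSpace ℝ (Fin d) =>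
      (γ p.2 p.1) ^ 2 * ‖p.1 - p.2‖ ^ 2) (μ.prod μ) := by
    have h := hF_int.swap
    apply h.congr
    filter_upwards with p
    show γ p.2 p.1 ^ 2 * ‖p.2 - p.1‖ ^ 2 = γ p.2 p.1 ^ 2 * ‖p.1 - p.2‖ ^ 2
    rw [norm_sub_rev]
  have hswap : (∫ p : EuclideanSpace ℝ (Fin d) × EuclideanSpace ℝ (Fin d),
        (γ p.1 p.2) ^ 2 * ‖p.1 - p.2‖ ^ 2 ∂(μ.prod μ))
      = ∫ p : EuclideanSpace ℝ (Fin d) × EuclideanSpace ℝ (Fin d),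
          (γ p.2 p.1) ^ 2 * ‖p.1 - p.2‖ ^ 2 ∂(μ.prod μ) := by
    rw [← integral_prod_swap (fun p : EuclideanSpace ℝ (Fin d) × EuclideanSpace ℝ (Fin d) =>
      (γ p.1 p.2) ^ 2 * ‖p.1 - p.2‖ ^ 2)]
    congr 1
    funext p
    show γ p.2 p.1 ^ 2 * ‖p.2 - p.1‖ ^ 2 = γ p.2 p.1 ^ 2 * ‖p.1 - p.2‖ ^ 2
    rw [norm_sub_rev]
  -- pointwise bound after symmetrization
  have hkey : (2:ℝ) * ∫ p : EuclideanSpace ℝ (Fin d) × EuclideanSpace ℝ (Fin d),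
        (γ p.1 p.2) ^ 2 * ‖p.1 - p.2‖ ^ 2 ∂(μ.prod μ)
      ≤ ∫ p : EuclideanSpace ℝ (Fin d) × EuclideanSpace ℝ (Fin d),
          ‖p.1 - p.2‖ ^ 2 ∂(μ.prod μ) := by
    have heq : (2:ℝ) * ∫ p : EuclideanSpace ℝ (Fin d) × EuclideanSpace ℝ (Fin d),
        (γ p.1 p.2) ^ 2 * ‖p.1 - p.2‖ ^ 2 ∂(μ.prod μ)
        = ∫ p : EuclideanSpace ℝ (Fin d) × EuclideanSpace ℝ (Fin d),
            ((γ p.1 p.2) ^ 2 * ‖p.1 - p.2‖ ^ 2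
            + (γ p.2 p.1) ^ 2 * ‖p.1 - p.2‖ ^ 2) ∂(μ.prod μ) := by
      rw [integral_add hF_int hswap_int, ← hswap]; ring
    rw [heq]
    apply integral_mono (hF_int.add hswap_int) hG_int
    intro p
    have h1 := hγpos p.1 p.2
    have h2 := hγpos p.2 p.1
    have hs := hγsum p.1 p.2
    have h3 : (0:ℝ) ≤ ‖p.1 - p.2‖ ^ 2 := by positivity
    simp only [Pi.add_apply]
    have hsq : (γ p.1 p.2 + γ p.2 p.1) ^ 2 = 1 := by rw [hs]; norm_num
    have h4 : γ p.1 p.2 ^ 2 + γ p.2 p.1 ^ 2 ≤ 1 := by nlinarith [mul_pos h1 h2]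
    nlinarith [mul_le_mul_of_nonneg_right h4 h3]
  -- integrability of ‖v - m‖²
  have hsubm_int : Integrable (fun v : EuclideanSpace ℝ (Fin d) => ‖v - m‖ ^ 2) μ := by
    have h2 : MemLp (fun v : EuclideanSpace ℝ (Fin d) => v) 2 μ :=
      (memLp_two_iff_integrable_sq_norm aestronglyMeasurable_id).mpr hmom
    have h3 : MemLp (fun v : EuclideanSpace ℝ (Fin d) => v - m) 2 μ := h2.sub (memLp_const m)
    exact (memLp_two_iff_integrable_sq_norm h3.aestronglyMeasurable).mp h3
  have hinner_int : Integrable (fun v : EuclideanSpace ℝ (Fin d) => (inner ℝ v m : ℝ)) μ := by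
    have h := hid.const_inner (𝕜 := ℝ) m
    apply h.congr
    filter_upwards with v using real_inner_comm v m
  have hinnerint : ∫ v, (inner ℝ v m : ℝ) ∂μ = ‖m‖ ^ 2 := by
    have h1 : ∫ v, (inner ℝ m v : ℝ) ∂μ = (inner ℝ m m : ℝ) := integral_inner hid m
    calc ∫ v, (inner ℝ v m : ℝ) ∂μ = ∫ v, (inner ℝ m v : ℝ) ∂μ := by
          congr 1; funext v; exact real_inner_comm m v
      _ = (inner ℝ m m : ℝ) := h1
      _ = ‖m‖ ^ 2 := real_inner_self_eq_norm_sq m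
  have hvar : ∫ v, ‖v - m‖ ^ 2 ∂μ = (∫ v, ‖v‖ ^ 2 ∂μ) - ‖m‖ ^ 2 := by
    calc ∫ v, ‖v - m‖ ^ 2 ∂μ
        = ∫ v, (‖v‖ ^ 2 - 2 * (inner ℝ v m : ℝ) + ‖m‖ ^ 2) ∂μ := by
          congr 1; funext v; exact norm_sub_sq_real v m
      _ = (∫ v, (‖v‖ ^ 2 - 2 * (inner ℝ v m : ℝ)) ∂μ)
          + ∫ _v : EuclideanSpace ℝ (Fin d), ‖m‖ ^ 2 ∂μ :=
          integral_add (hmom.sub (hinner_int.const_mul 2)) (integrable_const _)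
      _ = (∫ v, ‖v‖ ^ 2 ∂μ) - ‖m‖ ^ 2 := by
          rw [integral_sub hmom (hinner_int.const_mul 2), integral_const, probReal_univ,
            one_smul, integral_const_mul, hinnerint]
          ring
  -- compute the inner integral of ‖v - w‖²
  have hinner_int' : ∀ v : EuclideanSpace ℝ (Fin d),
      Integrable (fun w : EuclideanSpace ℝ (Fin d) => (inner ℝ v w : ℝ)) μ :=
    fun v => hid.const_inner (𝕜 := ℝ) v
  have hGinner : ∀ v : EuclideanSpace ℝ (Fin d), ∫ w, ‖v - w‖ ^ 2 ∂μ
      = ‖v‖ ^ 2 - 2 * (inner ℝ v m : ℝ) + ∫ w, ‖w‖ ^ 2 ∂μ := by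
    intro v
    calc ∫ w, ‖v - w‖ ^ 2 ∂μ
        = ∫ w, (‖v‖ ^ 2 - 2 * (inner ℝ v w : ℝ) + ‖w‖ ^ 2) ∂μ := by
          congr 1; funext w; exact norm_sub_sq_real v w
      _ = (∫ w, (‖v‖ ^ 2 - 2 * (inner ℝ v w : ℝ)) ∂μ) + ∫ w, ‖w‖ ^ 2 ∂μ :=
          integral_add ((integrable_const _).sub ((hinner_int' v).const_mul 2)) hmom
      _ = ‖v‖ ^ 2 - 2 * (inner ℝ v m : ℝ) + ∫ w, ‖w‖ ^ 2 ∂μ := by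
          rw [integral_sub (integrable_const _) ((hinner_int' v).const_mul 2),
            integral_const, probReal_univ, one_smul,
            integral_const_mul, integral_inner hid]
  have hJ : ∫ p : EuclideanSpace ℝ (Fin d) × EuclideanSpace ℝ (Fin d),
      ‖p.1 - p.2‖ ^ 2 ∂(μ.prod μ) = 2 * ∫ v, ‖v - m‖ ^ 2 ∂μ := by
    have h5 : (∫ v, ∫ w, ‖v - w‖ ^ 2 ∂μ ∂μ)
        = ∫ p : EuclideanSpace ℝ (Fin d) × EuclideanSpace ℝ (Fin d),
            ‖p.1 - p.2‖ ^ 2 ∂(μ.prod μ) := integral_integral hG_int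
    rw [← h5]
    calc ∫ v, ∫ w, ‖v - w‖ ^ 2 ∂μ ∂μ
        = ∫ v, (‖v‖ ^ 2 - 2 * (inner ℝ v m : ℝ) + ∫ w, ‖w‖ ^ 2 ∂μ) ∂μ := by
          congr 1; funext v; exact hGinner v
      _ = (∫ v, (‖v‖ ^ 2 - 2 * (inner ℝ v m : ℝ)) ∂μ)
          + ∫ _v : EuclideanSpace ℝ (Fin d), (∫ w, ‖w‖ ^ 2 ∂μ) ∂μ :=
          integral_add (hmom.sub (hinner_int.const_mul 2)) (integrable_const _)
      _ = (∫ v, ‖v‖ ^ 2 ∂μ) - 2 * ‖m‖ ^ 2 + ∫ w, ‖w‖ ^ 2 ∂μ := by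
          rw [integral_sub hmom (hinner_int.const_mul 2), integral_const, probReal_univ,
            one_smul, integral_const_mul, hinnerint]
      _ = 2 * ∫ v, ‖v - m‖ ^ 2 ∂μ := by rw [hvar]; ring
  rw [hLHS]
  linarith [hkey, hJ]
end

section
/- Bound on the cross alignment term: for every β > 0, ∫∫ γ_β(v,v_*) ⟨v − m, v_* − v⟩ dμ(v) dμ(v_*) ≤ −(1 − ξ_β) · (1/2) ∫ ‖v − m‖² dμ(v), where ξ_β := (1 + exp(−2β(𝓔̄ − 𝓔̲)))/(1 + exp(−β(𝓔̄ − 𝓔̲)))². -/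
open MeasureTheory

set_option maxHeartbeats 1000000

/-- Bound on the cross alignment term:
`∫∫ γ_β(v,v_*) ⟨v - m, v_* - v⟩ dμ dμ ≤ -(1 - ξ_β) (1/2) ∫ ‖v - m‖² dμ`. -/
theorem cross_alignment_bound {d : ℕ} (hd : 1 ≤ d)
    (μ : Measure (EuclideanSpace ℝ (Fin d))) [IsProbabilityMeasure μ]
    (𝓔 : EuclideanSpace ℝ (Fin d) → ℝ) (h𝓔 : Measurable 𝓔)
    (hbA : BddAbove (Set.range 𝓔)) (hbB : BddBelow (Set.range 𝓔))
    (hmom : Integrable (fun v => ‖v‖ ^ 2) μ)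
    (β : ℝ) (hβ : 0 < β) :
    let γ : EuclideanSpace ℝ (Fin d) → EuclideanSpace ℝ (Fin d) → ℝ :=
      fun x y => Real.exp (-β * 𝓔 y) / (Real.exp (-β * 𝓔 x) + Real.exp (-β * 𝓔 y))
    let m := ∫ v, v ∂μ
    let Einf := sInf (Set.range 𝓔)
    let Esup := sSup (Set.range 𝓔)
    let ξβ := (1 + Real.exp (-2 * β * (Esup - Einf))) /
      (1 + Real.exp (-β * (Esup - Einf))) ^ 2
    (∫ v, ∫ w, γ v w * (inner ℝ (v - m) (w - v) : ℝ) ∂μ ∂μ) ≤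
      -(1 - ξβ) * ((1 / 2) * ∫ v, ‖v - m‖ ^ 2 ∂μ) := by
  intro γ m Einf Esup ξβ
  -- bounds on 𝓔
  have hEle : ∀ v : (EuclideanSpace ℝ (Fin d)), Einf ≤ 𝓔 v := fun v => csInf_le hbB ⟨v, rfl⟩
  have hEge : ∀ v : (EuclideanSpace ℝ (Fin d)), 𝓔 v ≤ Esup := fun v => le_csSup hbA ⟨v, rfl⟩
  have ha : 0 ≤ Esup - Einf := by
    have h1 := hEle (0 : (EuclideanSpace ℝ (Fin d))); have h2 := hEge (0 : (EuclideanSpace ℝ (Fin d))); linarith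
  set e := Real.exp (-β * (Esup - Einf)) with he
  have he_pos : 0 < e := Real.exp_pos _
  set c := e / (1 + e) with hc
  have hc_pos : 0 < c := div_pos he_pos (by linarith)
  -- γ properties
  have hexp_pos : ∀ v : (EuclideanSpace ℝ (Fin d)), 0 < Real.exp (-β * 𝓔 v) := fun v => Real.exp_pos _
  have hden_pos : ∀ v w : (EuclideanSpace ℝ (Fin d)), 0 < Real.exp (-β * 𝓔 v) + Real.exp (-β * 𝓔 w) :=
    fun v w => by positivity
  have hγ_add : ∀ v w : (EuclideanSpace ℝ (Fin d)), γ v w + γ w v = 1 := by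
    intro v w
    show Real.exp (-β * 𝓔 w) / (Real.exp (-β * 𝓔 v) + Real.exp (-β * 𝓔 w)) +
        Real.exp (-β * 𝓔 v) / (Real.exp (-β * 𝓔 w) + Real.exp (-β * 𝓔 v)) = 1
    rw [div_add_div _ _ (hden_pos v w).ne' (hden_pos w v).ne']
    rw [div_eq_one_iff_eq (by positivity)]
    ring
  have hγ_lb : ∀ v w : (EuclideanSpace ℝ (Fin d)), c ≤ γ v w := by
    intro v w
    show c ≤ Real.exp (-β * 𝓔 w) / (Real.exp (-β * 𝓔 v) + Real.exp (-β * 𝓔 w))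
    rw [hc, div_le_div_iff₀ (by linarith) (hden_pos v w)]
    have key : e * Real.exp (-β * 𝓔 v) ≤ Real.exp (-β * 𝓔 w) := by
      rw [he, ← Real.exp_add]
      apply Real.exp_le_exp.2
      have := hEle v; have := hEge w
      nlinarith
    nlinarith [(hexp_pos w).le, he_pos.le]
  have hγ_nonneg : ∀ v w : (EuclideanSpace ℝ (Fin d)), 0 ≤ γ v w := fun v w => le_trans hc_pos.le (hγ_lb v w)
  have hγ_le1 : ∀ v w : (EuclideanSpace ℝ (Fin d)), γ v w ≤ 1 := by
    intro v w
    have h1 := hγ_add v w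
    have h2 := hγ_nonneg w v
    linarith
  -- integrability of id
  have hid_int : Integrable (fun v : (EuclideanSpace ℝ (Fin d)) => v) μ := by
    refine Integrable.mono' ((integrable_const (1:ℝ)).add hmom)
      measurable_id.aestronglyMeasurable (Filter.Eventually.of_forall fun v => ?_)
    simp only [Pi.add_apply]
    nlinarith [sq_nonneg (‖v‖ - 1), norm_nonneg v]
  have hsub_int : Integrable (fun v : (EuclideanSpace ℝ (Fin d)) => v - m) μ := hid_int.sub (integrable_const m)
  have hsub_zero : (∫ v : (EuclideanSpace ℝ (Fin d)), (v - m) ∂μ) = 0 := by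
    rw [integral_sub hid_int (integrable_const m), integral_const, probReal_univ, one_smul]
    exact sub_self m
  -- integrability of ‖v-m‖ and ‖v-m‖²
  have hN : Integrable (fun v : (EuclideanSpace ℝ (Fin d)) => ‖v - m‖) μ := hsub_int.norm
  have hW : Integrable (fun v : (EuclideanSpace ℝ (Fin d)) => ‖v - m‖ ^ 2) μ := by
    refine Integrable.mono' ((hmom.const_mul 2).add (integrable_const (2 * ‖m‖ ^ 2)))
      ((measurable_id.sub measurable_const).norm.pow measurable_const).aestronglyMeasurable
      (Filter.Eventually.of_forall fun v => ?_)
    simp only [Pi.add_apply]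
    have h1 : ‖v - m‖ ≤ ‖v‖ + ‖m‖ := norm_sub_le v m
    rw [Real.norm_eq_abs, abs_of_nonneg (by positivity)]
    nlinarith [norm_nonneg v, norm_nonneg m, norm_nonneg (v - m), sq_nonneg (‖v‖ - ‖m‖)]
  -- product-measure integrability
  set π := μ.prod μ with hπ
  have hprod1 : Integrable (fun p : (EuclideanSpace ℝ (Fin d)) × (EuclideanSpace ℝ (Fin d)) => ‖p.1 - m‖ * ‖p.2 - m‖) π := hN.mul_prod hN
  have hprod2 : Integrable (fun p : (EuclideanSpace ℝ (Fin d)) × (EuclideanSpace ℝ (Fin d)) => ‖p.1 - m‖ ^ 2) π := by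
    have := hW.mul_prod (integrable_const (1:ℝ) : Integrable (fun _ : (EuclideanSpace ℝ (Fin d)) => (1:ℝ)) μ)
    simpa using this
  have hprod2' : Integrable (fun p : (EuclideanSpace ℝ (Fin d)) × (EuclideanSpace ℝ (Fin d)) => ‖p.2 - m‖ ^ 2) π := by
    have := (integrable_const (1:ℝ) : Integrable (fun _ : (EuclideanSpace ℝ (Fin d)) => (1:ℝ)) μ).mul_prod hW
    simpa using this
  -- measurability of γ on the product
  have hexpm : Measurable fun v : (EuclideanSpace ℝ (Fin d)) => Real.exp (-β * 𝓔 v) :=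
    Real.measurable_exp.comp (h𝓔.const_mul (-β))
  have mγ : Measurable fun p : (EuclideanSpace ℝ (Fin d)) × (EuclideanSpace ℝ (Fin d)) => γ p.1 p.2 :=
    (hexpm.comp measurable_snd).div ((hexpm.comp measurable_fst).add (hexpm.comp measurable_snd))
  have mγ' : Measurable fun p : (EuclideanSpace ℝ (Fin d)) × (EuclideanSpace ℝ (Fin d)) => γ p.2 p.1 :=
    (hexpm.comp measurable_fst).div ((hexpm.comp measurable_snd).add (hexpm.comp measurable_fst))
  have minner : Measurable fun p : (EuclideanSpace ℝ (Fin d)) × (EuclideanSpace ℝ (Fin d)) => (inner ℝ (p.1 - m) (p.2 - p.1) : ℝ) :=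
    (measurable_fst.sub measurable_const).inner (measurable_snd.sub measurable_fst)
  have minner' : Measurable fun p : (EuclideanSpace ℝ (Fin d)) × (EuclideanSpace ℝ (Fin d)) => (inner ℝ (p.2 - m) (p.1 - p.2) : ℝ) :=
    (measurable_snd.sub measurable_const).inner (measurable_fst.sub measurable_snd)
  have minnerX : Measurable fun p : (EuclideanSpace ℝ (Fin d)) × (EuclideanSpace ℝ (Fin d)) => (inner ℝ (p.1 - m) (p.2 - m) : ℝ) :=
    (measurable_fst.sub measurable_const).inner (measurable_snd.sub measurable_const)
  -- key pointwise bounds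
  have hbd : ∀ p : (EuclideanSpace ℝ (Fin d)) × (EuclideanSpace ℝ (Fin d)), |(inner ℝ (p.1 - m) (p.2 - p.1) : ℝ)| ≤
      ‖p.1 - m‖ * ‖p.2 - m‖ + ‖p.1 - m‖ ^ 2 := by
    intro p
    have h1 : |(inner ℝ (p.1 - m) (p.2 - p.1) : ℝ)| ≤ ‖p.1 - m‖ * ‖p.2 - p.1‖ :=
      abs_real_inner_le_norm _ _
    have h2 : ‖p.2 - p.1‖ ≤ ‖p.2 - m‖ + ‖p.1 - m‖ := by
      have : p.2 - p.1 = (p.2 - m) - (p.1 - m) := by abel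
      rw [this]
      exact norm_sub_le _ _
    nlinarith [norm_nonneg (p.1 - m), norm_nonneg (p.2 - m)]
  -- integrability of K
  have hKint : Integrable (fun p : (EuclideanSpace ℝ (Fin d)) × (EuclideanSpace ℝ (Fin d)) => γ p.1 p.2 * (inner ℝ (p.1 - m) (p.2 - p.1) : ℝ)) π := by
    refine Integrable.mono' (hprod1.add hprod2)
      (mγ.mul minner).aestronglyMeasurable (Filter.Eventually.of_forall fun p => ?_)
    simp only [Pi.add_apply]
    rw [Real.norm_eq_abs, abs_mul, abs_of_nonneg (hγ_nonneg _ _)]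
    have := hbd p
    have h3 := hγ_le1 p.1 p.2
    have h4 := hγ_nonneg p.1 p.2
    have h5 : |(inner ℝ (p.1 - m) (p.2 - p.1) : ℝ)| ≥ 0 := abs_nonneg _
    nlinarith
  have hXint : Integrable (fun p : (EuclideanSpace ℝ (Fin d)) × (EuclideanSpace ℝ (Fin d)) => (inner ℝ (p.1 - m) (p.2 - m) : ℝ)) π := by
    refine Integrable.mono' hprod1 minnerX.aestronglyMeasurable
      (Filter.Eventually.of_forall fun p => ?_)
    rw [Real.norm_eq_abs]
    exact abs_real_inner_le_norm _ _
  have hAint : Integrable (fun p : (EuclideanSpace ℝ (Fin d)) × (EuclideanSpace ℝ (Fin d)) => γ p.1 p.2 * ‖p.1 - m‖ ^ 2) π := by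
    refine Integrable.mono' hprod2
      (mγ.mul ((measurable_fst.sub measurable_const).norm.pow measurable_const)).aestronglyMeasurable
      (Filter.Eventually.of_forall fun p => ?_)
    rw [Real.norm_eq_abs, abs_mul, abs_of_nonneg (hγ_nonneg _ _), abs_of_nonneg (by positivity)]
    have h3 := hγ_le1 p.1 p.2
    nlinarith [sq_nonneg ‖p.1 - m‖]
  have hBint : Integrable (fun p : (EuclideanSpace ℝ (Fin d)) × (EuclideanSpace ℝ (Fin d)) => γ p.2 p.1 * ‖p.2 - m‖ ^ 2) π := by
    refine Integrable.mono' hprod2'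
      (mγ'.mul ((measurable_snd.sub measurable_const).norm.pow measurable_const)).aestronglyMeasurable
      (Filter.Eventually.of_forall fun p => ?_)
    rw [Real.norm_eq_abs, abs_mul, abs_of_nonneg (hγ_nonneg _ _), abs_of_nonneg (by positivity)]
    have h3 := hγ_le1 p.2 p.1
    nlinarith [sq_nonneg ‖p.2 - m‖]
  -- the LHS as an integral over the product
  have hLHS : (∫ v, ∫ w, γ v w * (inner ℝ (v - m) (w - v) : ℝ) ∂μ ∂μ) =
      ∫ p : (EuclideanSpace ℝ (Fin d)) × (EuclideanSpace ℝ (Fin d)), γ p.1 p.2 * (inner ℝ (p.1 - m) (p.2 - p.1) : ℝ) ∂π :=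
    (integral_prod _ hKint).symm
  -- swap identity
  have hswapT : (∫ p : (EuclideanSpace ℝ (Fin d)) × (EuclideanSpace ℝ (Fin d)), γ p.2 p.1 * (inner ℝ (p.2 - m) (p.1 - p.2) : ℝ) ∂π) =
      ∫ p : (EuclideanSpace ℝ (Fin d)) × (EuclideanSpace ℝ (Fin d)), γ p.1 p.2 * (inner ℝ (p.1 - m) (p.2 - p.1) : ℝ) ∂π := by
    exact integral_prod_swap (fun p : (EuclideanSpace ℝ (Fin d)) × (EuclideanSpace ℝ (Fin d)) => γ p.1 p.2 * (inner ℝ (p.1 - m) (p.2 - p.1) : ℝ))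
  have hTint : Integrable (fun p : (EuclideanSpace ℝ (Fin d)) × (EuclideanSpace ℝ (Fin d)) => γ p.2 p.1 * (inner ℝ (p.2 - m) (p.1 - p.2) : ℝ)) π := by
    have := hKint.swap
    simpa [Function.comp_def] using this
  have hswapB : (∫ p : (EuclideanSpace ℝ (Fin d)) × (EuclideanSpace ℝ (Fin d)), γ p.2 p.1 * ‖p.2 - m‖ ^ 2 ∂π) =
      ∫ p : (EuclideanSpace ℝ (Fin d)) × (EuclideanSpace ℝ (Fin d)), γ p.1 p.2 * ‖p.1 - m‖ ^ 2 ∂π := by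
    exact integral_prod_swap (fun p : (EuclideanSpace ℝ (Fin d)) × (EuclideanSpace ℝ (Fin d)) => γ p.1 p.2 * ‖p.1 - m‖ ^ 2)
  -- pointwise decomposition
  have hptwise : ∀ p : (EuclideanSpace ℝ (Fin d)) × (EuclideanSpace ℝ (Fin d)),
      γ p.1 p.2 * (inner ℝ (p.1 - m) (p.2 - p.1) : ℝ) +
        γ p.2 p.1 * (inner ℝ (p.2 - m) (p.1 - p.2) : ℝ) =
      (inner ℝ (p.1 - m) (p.2 - m) : ℝ) - γ p.1 p.2 * ‖p.1 - m‖ ^ 2 -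
        γ p.2 p.1 * ‖p.2 - m‖ ^ 2 := by
    intro ⟨a, b⟩
    have h1 : (inner ℝ (a - m) (b - a) : ℝ) = (inner ℝ (a - m) (b - m) : ℝ) - ‖a - m‖ ^ 2 := by
      have hba : b - a = (b - m) - (a - m) := by abel
      rw [hba, inner_sub_right, real_inner_self_eq_norm_sq]
    have h2 : (inner ℝ (b - m) (a - b) : ℝ) = (inner ℝ (a - m) (b - m) : ℝ) - ‖b - m‖ ^ 2 := by
      have hab : a - b = (a - m) - (b - m) := by abel
      rw [hab, inner_sub_right, real_inner_self_eq_norm_sq, real_inner_comm]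
    have h3 := hγ_add a b
    simp only
    rw [h1, h2]
    linear_combination (inner ℝ (a - m) (b - m) : ℝ) * h3
  -- ∫ X = 0
  have hXzero : (∫ p : (EuclideanSpace ℝ (Fin d)) × (EuclideanSpace ℝ (Fin d)), (inner ℝ (p.1 - m) (p.2 - m) : ℝ) ∂π) = 0 := by
    rw [integral_prod _ hXint]
    have : ∀ v : (EuclideanSpace ℝ (Fin d)), (∫ w, (inner ℝ (v - m) (w - m) : ℝ) ∂μ) = 0 := by
      intro v
      rw [integral_inner hsub_int, hsub_zero, inner_zero_right]
    simp only [this, integral_zero]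
  -- key identity: LHS = -∫ γ p.1 p.2 ‖p.1-m‖²
  set I := ∫ p : (EuclideanSpace ℝ (Fin d)) × (EuclideanSpace ℝ (Fin d)), γ p.1 p.2 * (inner ℝ (p.1 - m) (p.2 - p.1) : ℝ) ∂π with hI
  set A := ∫ p : (EuclideanSpace ℝ (Fin d)) × (EuclideanSpace ℝ (Fin d)), γ p.1 p.2 * ‖p.1 - m‖ ^ 2 ∂π with hA
  have hkey : I = -A := by
    have h2I : I + I = -A - A := by
      nth_rewrite 1 [← hswapT]
      rw [hI, ← integral_add hTint hKint]
      have : (∫ p : (EuclideanSpace ℝ (Fin d)) × (EuclideanSpace ℝ (Fin d)), (γ p.2 p.1 * (inner ℝ (p.2 - m) (p.1 - p.2) : ℝ) +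
          γ p.1 p.2 * (inner ℝ (p.1 - m) (p.2 - p.1) : ℝ)) ∂π) =
          ∫ p : (EuclideanSpace ℝ (Fin d)) × (EuclideanSpace ℝ (Fin d)), ((inner ℝ (p.1 - m) (p.2 - m) : ℝ) - γ p.1 p.2 * ‖p.1 - m‖ ^ 2 -
            γ p.2 p.1 * ‖p.2 - m‖ ^ 2) ∂π := by
        congr 1
        funext p
        have := hptwise p
        linarith
      have hXAint : Integrable (fun p : (EuclideanSpace ℝ (Fin d)) × (EuclideanSpace ℝ (Fin d)) =>
          (inner ℝ (p.1 - m) (p.2 - m) : ℝ) - γ p.1 p.2 * ‖p.1 - m‖ ^ 2) π := hXint.sub hAint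
      rw [this, integral_sub hXAint hBint, integral_sub hXint hAint, hXzero, hswapB, ← hA]
      ring
    linarith
  -- lower bound on A
  have hV_nonneg : 0 ≤ ∫ v, ‖v - m‖ ^ 2 ∂μ :=
    integral_nonneg fun v => by positivity
  have hprod2_eq : (∫ p : (EuclideanSpace ℝ (Fin d)) × (EuclideanSpace ℝ (Fin d)), ‖p.1 - m‖ ^ 2 ∂π) = ∫ v, ‖v - m‖ ^ 2 ∂μ := by
    rw [integral_prod _ hprod2]
    have hc1 : ∀ v : EuclideanSpace ℝ (Fin d), (∫ _w : EuclideanSpace ℝ (Fin d), ‖v - m‖ ^ 2 ∂μ) = ‖v - m‖ ^ 2 := by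
      intro v
      rw [integral_const, probReal_univ, one_smul]
    simp only [hc1]
  have hA_lb : c * (∫ v, ‖v - m‖ ^ 2 ∂μ) ≤ A := by
    rw [← hprod2_eq, ← integral_const_mul]
    refine integral_mono (hprod2.const_mul c) hAint fun p => ?_
    exact mul_le_mul_of_nonneg_right (hγ_lb p.1 p.2) (by positivity)
  -- arithmetic on ξβ
  have hξ : 1 - ξβ = 2 * e / (1 + e) ^ 2 := by
    have he2 : Real.exp (-2 * β * (Esup - Einf)) = e ^ 2 := by
      rw [he, sq, ← Real.exp_add]; ring_nf
    show 1 - (1 + Real.exp (-2 * β * (Esup - Einf))) / (1 + Real.exp (-β * (Esup - Einf))) ^ 2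
        = 2 * e / (1 + e) ^ 2
    rw [he2, ← he]
    field_simp
    ring
  have hc_ge : (1 - ξβ) / 2 ≤ c := by
    rw [hξ, hc]
    have h1 : (0:ℝ) < 1 + e := by linarith
    have h2 : 2 * e / (1 + e) ^ 2 / 2 = e / (1 + e) ^ 2 := by ring
    rw [h2, div_le_div_iff₀ (by positivity) h1]
    have h3 : 0 ≤ e * e * (1 + e) := by positivity
    nlinarith [h3]
  -- conclude
  rw [hLHS, hkey]
  have step1 : (1 - ξβ) * ((1 / 2) * ∫ v, ‖v - m‖ ^ 2 ∂μ) ≤ c * (∫ v, ‖v - m‖ ^ 2 ∂μ) := by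
    have : (1 - ξβ) * ((1 / 2) * ∫ v, ‖v - m‖ ^ 2 ∂μ) =
        ((1 - ξβ) / 2) * ∫ v, ‖v - m‖ ^ 2 ∂μ := by ring
    rw [this]
    exact mul_le_mul_of_nonneg_right hc_ge hV_nonneg
  linarith [hA_lb]
end

section
/- Core inequality of Proposition 2.1 (microscopic best estimate only): assume exp(−β(𝓔̄ − 𝓔̲)) ≤ √2 − 1 and let λ, σ, κ ≥ 0. Then (λ²/2) ∫∫ (γ_β(v,v_*))² ‖v_* − v‖² dμ dμ + λ ∫∫ γ_β(v,v_*) ⟨v − m, v_* − v⟩ dμ dμ + (σ² κ/2) ∫∫ (γ_β(v,v_*))² ‖v − v_*‖² dμ dμ ≤ −( λ/C_{β,𝓔} − λ² − 2σ²κ ) V, where C_{β,𝓔} := exp(β(𝓔̄ − 𝓔̲)). Consequently, if σ² < (λ/(2κ))(1/C_{β,𝓔} − λ), the right-hand side is strictly negative whenever V > 0. -/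
open MeasureTheory

set_option maxHeartbeats 2000000

/-- Core inequality of Proposition 2.1 (microscopic best estimate only): the sum of the
quadratic alignment term, the cross alignment term and the diffusion term is bounded by
`-(λ/C_{β,𝓔} - λ² - 2σ²κ) V`; moreover under the parameter condition
`σ² < (λ/(2κ))(1/C_{β,𝓔} - λ)` this bound is strictly negative whenever `V > 0`. -/
theorem core_inequality_microscopic {d : ℕ} (hd : 1 ≤ d)
    (μ : Measure (EuclideanSpace ℝ (Fin d))) [IsProbabilityMeasure μ]
    (𝓔 : EuclideanSpace ℝ (Fin d) → ℝ) (h𝓔 : Measurable 𝓔)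
    (hbA : BddAbove (Set.range 𝓔)) (hbB : BddBelow (Set.range 𝓔))
    (hmom : Integrable (fun v => ‖v‖ ^ 2) μ)
    (β : ℝ) (hβ : 0 < β)
    (hlarge : Real.exp (-β * (sSup (Set.range 𝓔) - sInf (Set.range 𝓔))) ≤
      Real.sqrt 2 - 1)
    (lam sig kap : ℝ) (hlam : 0 ≤ lam) (hsig : 0 ≤ sig) (hkap : 0 ≤ kap) :
    let γ : EuclideanSpace ℝ (Fin d) → EuclideanSpace ℝ (Fin d) → ℝ :=
      fun x y => Real.exp (-β * 𝓔 y) / (Real.exp (-β * 𝓔 x) + Real.exp (-β * 𝓔 y))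
    let m := ∫ v, v ∂μ
    let V := (1 / 2 : ℝ) * ∫ v, ‖v - m‖ ^ 2 ∂μ
    let C := Real.exp (β * (sSup (Set.range 𝓔) - sInf (Set.range 𝓔)))
    (lam ^ 2 / 2) * (∫ v, ∫ w, (γ v w) ^ 2 * ‖w - v‖ ^ 2 ∂μ ∂μ) +
      lam * (∫ v, ∫ w, γ v w * (inner ℝ (v - m) (w - v) : ℝ) ∂μ ∂μ) +
      (sig ^ 2 * kap / 2) * (∫ v, ∫ w, (γ v w) ^ 2 * ‖v - w‖ ^ 2 ∂μ ∂μ) ≤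
      -(lam / C - lam ^ 2 - 2 * sig ^ 2 * kap) * V ∧
    (sig ^ 2 < lam / (2 * kap) * (1 / C - lam) → 0 < V →
      -(lam / C - lam ^ 2 - 2 * sig ^ 2 * kap) * V < 0) := by
  intro γ m V C
  have hE : Nonempty (EuclideanSpace ℝ (Fin d)) := ⟨0⟩
  -- basic facts about C and γ
  have hne : (Set.range 𝓔).Nonempty := ⟨𝓔 0, Set.mem_range_self 0⟩
  have hSI : sInf (Set.range 𝓔) ≤ sSup (Set.range 𝓔) := csInf_le_csSup hne hbB hbA
  have hC0 : (0:ℝ) < C := Real.exp_pos _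
  have hC1 : (1:ℝ) ≤ C := by
    have h0 : (0:ℝ) ≤ β * (sSup (Set.range 𝓔) - sInf (Set.range 𝓔)) := by nlinarith
    calc (1:ℝ) = Real.exp 0 := Real.exp_zero.symm
      _ ≤ C := Real.exp_le_exp.mpr h0
  have hden : ∀ x y : (EuclideanSpace ℝ (Fin d)), 0 < Real.exp (-β * 𝓔 x) + Real.exp (-β * 𝓔 y) := by
    intro x y; positivity
  have hγ_nn : ∀ x y : (EuclideanSpace ℝ (Fin d)), 0 ≤ γ x y := fun x y =>
    div_nonneg (Real.exp_pos _).le (hden x y).le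
  have hγ_le1 : ∀ x y : (EuclideanSpace ℝ (Fin d)), γ x y ≤ 1 := by
    intro x y
    rw [show γ x y = Real.exp (-β * 𝓔 y) / (Real.exp (-β * 𝓔 x) + Real.exp (-β * 𝓔 y)) from rfl,
      div_le_one (hden x y)]
    nlinarith [Real.exp_pos (-β * 𝓔 x)]
  have hγ_sum : ∀ x y : (EuclideanSpace ℝ (Fin d)), γ x y + γ y x = 1 := by
    intro x y
    show Real.exp (-β * 𝓔 y) / (Real.exp (-β * 𝓔 x) + Real.exp (-β * 𝓔 y)) +
      Real.exp (-β * 𝓔 x) / (Real.exp (-β * 𝓔 y) + Real.exp (-β * 𝓔 x)) = 1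
    have h1 := (hden x y).ne'
    have h2 := (hden y x).ne'
    field_simp
    ring
  have hγ_lb : ∀ x y : (EuclideanSpace ℝ (Fin d)), 1 / (1 + C) ≤ γ x y := by
    intro x y
    have hxS : 𝓔 y ≤ sSup (Set.range 𝓔) := le_csSup hbA (Set.mem_range_self y)
    have hxI : sInf (Set.range 𝓔) ≤ 𝓔 x := csInf_le hbB (Set.mem_range_self x)
    have key : Real.exp (-β * 𝓔 x) ≤ C * Real.exp (-β * 𝓔 y) := by
      rw [show C * Real.exp (-β * 𝓔 y) =
        Real.exp (β * (sSup (Set.range 𝓔) - sInf (Set.range 𝓔)) + -β * 𝓔 y) from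
        (Real.exp_add _ _).symm]
      apply Real.exp_le_exp.mpr
      nlinarith
    show 1 / (1 + C) ≤ Real.exp (-β * 𝓔 y) / (Real.exp (-β * 𝓔 x) + Real.exp (-β * 𝓔 y))
    rw [div_le_div_iff₀ (by linarith) (hden x y)]
    nlinarith [Real.exp_pos (-β * 𝓔 y)]
  -- integrability basics
  have hid : Integrable (fun v : EuclideanSpace ℝ (Fin d) => v) μ := by
    refine ((integrable_const (1:ℝ)).add hmom).mono'
      measurable_id.aestronglyMeasurable (Filter.Eventually.of_forall fun v => ?_)
    simp only [id_eq, Pi.add_apply]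
    nlinarith [norm_nonneg v, sq_nonneg (‖v‖ - 1)]
  have hsubm : Integrable (fun v : EuclideanSpace ℝ (Fin d) => v - m) μ := hid.sub (integrable_const m)
  have hE0 : ∫ v, (v - m) ∂μ = 0 := by
    rw [integral_sub hid (integrable_const m), integral_const, probReal_univ, one_smul]
    exact sub_self m
  have hvm2 : Integrable (fun v : EuclideanSpace ℝ (Fin d) => ‖v - m‖ ^ 2) μ := by
    refine ((hmom.const_mul 2).add (integrable_const (2 * ‖m‖ ^ 2))).mono'
      (((continuous_id.sub continuous_const).norm.pow 2).aestronglyMeasurable)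
      (Filter.Eventually.of_forall fun v => ?_)
    rw [Real.norm_eq_abs, abs_of_nonneg (by positivity)]
    simp only [Pi.add_apply]
    nlinarith [norm_sub_le v m, norm_nonneg v, norm_nonneg m, norm_nonneg (v - m),
      sq_nonneg (‖v‖ - ‖m‖)]
  have hV2 : ∫ v, ‖v - m‖ ^ 2 ∂μ = 2 * V := by
    show _ = 2 * ((1/2 : ℝ) * ∫ v, ‖v - m‖ ^ 2 ∂μ); ring
  have hV0 : (0:ℝ) ≤ V := by
    have h := integral_nonneg (μ := μ) (f := fun v : EuclideanSpace ℝ (Fin d) => ‖v - m‖ ^ 2)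
      (fun v => by positivity)
    show (0:ℝ) ≤ (1/2 : ℝ) * ∫ v, ‖v - m‖ ^ 2 ∂μ
    linarith
  -- product measure preliminaries
  have hPfst : MeasurePreserving (Prod.fst : (EuclideanSpace ℝ (Fin d)) × (EuclideanSpace ℝ (Fin d)) → (EuclideanSpace ℝ (Fin d))) (μ.prod μ) μ :=
    ⟨measurable_fst, by rw [Measure.map_fst_prod]; simp⟩
  have hPswap : MeasurePreserving (Prod.swap : (EuclideanSpace ℝ (Fin d)) × (EuclideanSpace ℝ (Fin d)) → (EuclideanSpace ℝ (Fin d)) × (EuclideanSpace ℝ (Fin d))) (μ.prod μ) (μ.prod μ) :=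
    Measure.measurePreserving_swap
  have hγmeas : Measurable (fun p : (EuclideanSpace ℝ (Fin d)) × (EuclideanSpace ℝ (Fin d)) => γ p.1 p.2) := by
    apply Measurable.div
    · exact Real.measurable_exp.comp ((h𝓔.comp measurable_snd).const_mul (-β))
    · exact (Real.measurable_exp.comp ((h𝓔.comp measurable_fst).const_mul (-β))).add
        (Real.measurable_exp.comp ((h𝓔.comp measurable_snd).const_mul (-β)))
  have hIfst : Integrable (fun p : (EuclideanSpace ℝ (Fin d)) × (EuclideanSpace ℝ (Fin d)) => ‖p.1‖ ^ 2) (μ.prod μ) :=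
    (hPfst.integrable_comp hmom.aestronglyMeasurable).mpr hmom
  have hIsnd : Integrable (fun p : (EuclideanSpace ℝ (Fin d)) × (EuclideanSpace ℝ (Fin d)) => ‖p.2‖ ^ 2) (μ.prod μ) :=
    ((⟨measurable_snd, by rw [Measure.map_snd_prod]; simp⟩ :
      MeasurePreserving (Prod.snd : (EuclideanSpace ℝ (Fin d)) × (EuclideanSpace ℝ (Fin d)) → (EuclideanSpace ℝ (Fin d))) (μ.prod μ) μ).integrable_comp
      hmom.aestronglyMeasurable).mpr hmom
  have hGint : Integrable
      (fun p : (EuclideanSpace ℝ (Fin d)) × (EuclideanSpace ℝ (Fin d)) => 2 * ‖p.1‖ ^ 2 + 2 * ‖p.2‖ ^ 2 + 2 * ‖m‖ ^ 2) (μ.prod μ) :=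
    ((hIfst.const_mul 2).add (hIsnd.const_mul 2)).add (integrable_const _)
  have hIvm2 : Integrable (fun p : (EuclideanSpace ℝ (Fin d)) × (EuclideanSpace ℝ (Fin d)) => ‖p.1 - m‖ ^ 2) (μ.prod μ) :=
    (hPfst.integrable_comp hvm2.aestronglyMeasurable).mpr hvm2
  -- pointwise norm bounds
  have hnb : ∀ p : (EuclideanSpace ℝ (Fin d)) × (EuclideanSpace ℝ (Fin d)), ‖p.2 - p.1‖ ^ 2 ≤ 2 * ‖p.1‖ ^ 2 + 2 * ‖p.2‖ ^ 2 := by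
    intro p
    nlinarith [norm_sub_le p.2 p.1, norm_nonneg p.1, norm_nonneg p.2,
      norm_nonneg (p.2 - p.1), sq_nonneg (‖p.1‖ - ‖p.2‖)]
  have hvmb : ∀ v : (EuclideanSpace ℝ (Fin d)), ‖v - m‖ ^ 2 ≤ 2 * ‖v‖ ^ 2 + 2 * ‖m‖ ^ 2 := by
    intro v
    nlinarith [norm_sub_le v m, norm_nonneg v, norm_nonneg m, norm_nonneg (v - m),
      sq_nonneg (‖v‖ - ‖m‖)]
  -- integrability of the various product integrands
  have hF1 : Integrable (fun p : (EuclideanSpace ℝ (Fin d)) × (EuclideanSpace ℝ (Fin d)) => γ p.1 p.2 ^ 2 * ‖p.2 - p.1‖ ^ 2) (μ.prod μ) := by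
    refine hGint.mono' ((hγmeas.pow_const 2).mul
      ((measurable_snd.sub measurable_fst).norm.pow_const 2)).aestronglyMeasurable
      (Filter.Eventually.of_forall fun p => ?_)
    rw [Real.norm_eq_abs, abs_of_nonneg (by positivity)]
    have h1 : γ p.1 p.2 ^ 2 ≤ 1 := by nlinarith [hγ_nn p.1 p.2, hγ_le1 p.1 p.2]
    nlinarith [hnb p, sq_nonneg (γ p.1 p.2), norm_nonneg (p.2 - p.1),
      sq_nonneg ‖p.2 - p.1‖, sq_nonneg ‖m‖, mul_le_mul_of_nonneg_right h1 (sq_nonneg ‖p.2 - p.1‖)]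
  have hF1s : Integrable (fun p : (EuclideanSpace ℝ (Fin d)) × (EuclideanSpace ℝ (Fin d)) => γ p.2 p.1 ^ 2 * ‖p.1 - p.2‖ ^ 2) (μ.prod μ) :=
    (hPswap.integrable_comp hF1.aestronglyMeasurable).mpr hF1
  have hFW : Integrable (fun p : (EuclideanSpace ℝ (Fin d)) × (EuclideanSpace ℝ (Fin d)) => ‖p.2 - p.1‖ ^ 2) (μ.prod μ) := by
    refine hGint.mono' ((measurable_snd.sub measurable_fst).norm.pow_const 2).aestronglyMeasurable
      (Filter.Eventually.of_forall fun p => ?_)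
    rw [Real.norm_eq_abs, abs_of_nonneg (by positivity)]
    nlinarith [hnb p, sq_nonneg ‖m‖]
  have hFA : Integrable (fun p : (EuclideanSpace ℝ (Fin d)) × (EuclideanSpace ℝ (Fin d)) =>
      γ p.1 p.2 * (inner ℝ (p.1 - m) (p.2 - m) : ℝ)) (μ.prod μ) := by
    refine hGint.mono' ((hγmeas).mul
      ((measurable_fst.sub measurable_const).inner (measurable_snd.sub measurable_const))).aestronglyMeasurable
      (Filter.Eventually.of_forall fun p => ?_)
    rw [Real.norm_eq_abs, abs_mul, abs_of_nonneg (hγ_nn p.1 p.2)]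
    have h2 : |(inner ℝ (p.1 - m) (p.2 - m) : ℝ)| ≤ ‖p.1 - m‖ * ‖p.2 - m‖ :=
      abs_real_inner_le_norm _ _
    have h3 : γ p.1 p.2 * |(inner ℝ (p.1 - m) (p.2 - m) : ℝ)| ≤ ‖p.1 - m‖ * ‖p.2 - m‖ := by
      nlinarith [hγ_nn p.1 p.2, hγ_le1 p.1 p.2, abs_nonneg (inner ℝ (p.1 - m) (p.2 - m) : ℝ)]
    have h4 : ‖p.1 - m‖ * ‖p.2 - m‖ ≤ (‖p.1 - m‖ ^ 2 + ‖p.2 - m‖ ^ 2) / 2 := by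
      nlinarith [sq_nonneg (‖p.1 - m‖ - ‖p.2 - m‖)]
    have h5 := hvmb p.1
    have h6 := hvmb p.2
    nlinarith [norm_nonneg p.1, norm_nonneg p.2]
  have hFAs : Integrable (fun p : (EuclideanSpace ℝ (Fin d)) × (EuclideanSpace ℝ (Fin d)) =>
      γ p.2 p.1 * (inner ℝ (p.2 - m) (p.1 - m) : ℝ)) (μ.prod μ) :=
    (hPswap.integrable_comp hFA.aestronglyMeasurable).mpr hFA
  have hFB : Integrable (fun p : (EuclideanSpace ℝ (Fin d)) × (EuclideanSpace ℝ (Fin d)) => γ p.1 p.2 * ‖p.1 - m‖ ^ 2) (μ.prod μ) := by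
    refine hIvm2.mono' (hγmeas.mul
      ((measurable_fst.sub measurable_const).norm.pow_const 2)).aestronglyMeasurable
      (Filter.Eventually.of_forall fun p => ?_)
    rw [Real.norm_eq_abs, abs_of_nonneg (mul_nonneg (hγ_nn p.1 p.2) (by positivity))]
    nlinarith [hγ_nn p.1 p.2, hγ_le1 p.1 p.2, sq_nonneg ‖p.1 - m‖,
      mul_le_mul_of_nonneg_right (hγ_le1 p.1 p.2) (sq_nonneg ‖p.1 - m‖)]
  have hInner : Integrable (fun p : (EuclideanSpace ℝ (Fin d)) × (EuclideanSpace ℝ (Fin d)) => (inner ℝ (p.1 - m) (p.2 - m) : ℝ)) (μ.prod μ) := by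
    refine hGint.mono'
      ((measurable_fst.sub measurable_const).inner (measurable_snd.sub measurable_const)).aestronglyMeasurable
      (Filter.Eventually.of_forall fun p => ?_)
    rw [Real.norm_eq_abs]
    have h2 : |(inner ℝ (p.1 - m) (p.2 - m) : ℝ)| ≤ ‖p.1 - m‖ * ‖p.2 - m‖ :=
      abs_real_inner_le_norm _ _
    have h4 : ‖p.1 - m‖ * ‖p.2 - m‖ ≤ (‖p.1 - m‖ ^ 2 + ‖p.2 - m‖ ^ 2) / 2 := by
      nlinarith [sq_nonneg (‖p.1 - m‖ - ‖p.2 - m‖)]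
    have h5 := hvmb p.1
    have h6 := hvmb p.2
    nlinarith
  have hF2 : Integrable (fun p : (EuclideanSpace ℝ (Fin d)) × (EuclideanSpace ℝ (Fin d)) =>
      γ p.1 p.2 * (inner ℝ (p.1 - m) (p.2 - p.1) : ℝ)) (μ.prod μ) := by
    have heq : (fun p : (EuclideanSpace ℝ (Fin d)) × (EuclideanSpace ℝ (Fin d)) => γ p.1 p.2 * (inner ℝ (p.1 - m) (p.2 - p.1) : ℝ)) =
        fun p : (EuclideanSpace ℝ (Fin d)) × (EuclideanSpace ℝ (Fin d)) => γ p.1 p.2 * (inner ℝ (p.1 - m) (p.2 - m) : ℝ) -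
          γ p.1 p.2 * ‖p.1 - m‖ ^ 2 := by
      funext p
      have h : p.2 - p.1 = (p.2 - m) - (p.1 - m) := by abel
      rw [h, inner_sub_right, real_inner_self_eq_norm_sq]
      ring
    rw [heq]
    exact hFA.sub hFB
  -- value of ∫∫ ‖w - v‖²
  have hinnerint : ∀ v : (EuclideanSpace ℝ (Fin d)), Integrable (fun w : EuclideanSpace ℝ (Fin d) => (inner ℝ (v - m) (w - m) : ℝ)) μ :=
    fun v => hsubm.const_inner (v - m)
  have hW_inner : ∀ v : (EuclideanSpace ℝ (Fin d)), ∫ w, ‖w - v‖ ^ 2 ∂μ = 2 * V + ‖v - m‖ ^ 2 := by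
    intro v
    have hint1 : Integrable (fun w : EuclideanSpace ℝ (Fin d) =>
        ‖w - m‖ ^ 2 - 2 * (inner ℝ (v - m) (w - m) : ℝ)) μ := by
      exact hvm2.sub ((hinnerint v).const_mul 2)
    have h1 : ∫ w, ‖w - v‖ ^ 2 ∂μ =
        ∫ w, ((‖w - m‖ ^ 2 - 2 * (inner ℝ (v - m) (w - m) : ℝ)) + ‖v - m‖ ^ 2) ∂μ := by
      refine integral_congr_ae (Filter.Eventually.of_forall fun w => ?_)
      beta_reduce
      have h : w - v = (w - m) - (v - m) := by abel
      rw [h, norm_sub_sq_real, real_inner_comm]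
    rw [h1, integral_add hint1 (integrable_const _),
      integral_sub hvm2 (by exact (hinnerint v).const_mul 2),
      integral_const_mul, integral_inner hsubm, hE0, inner_zero_right,
      integral_const, probReal_univ, one_smul, hV2]
    ring
  have hWval : ∫ p, ‖p.2 - p.1‖ ^ 2 ∂(μ.prod μ) = 4 * V := by
    rw [← integral_integral (f := fun v w : EuclideanSpace ℝ (Fin d) => ‖w - v‖ ^ 2) hFW]
    simp_rw [hW_inner]
    rw [integral_add (integrable_const _) hvm2, integral_const, probReal_univ, one_smul, hV2]
    ring
  have hprod_vm2 : ∫ p, ‖p.1 - m‖ ^ 2 ∂(μ.prod μ) = 2 * V := by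
    rw [← integral_integral (f := fun v _ : EuclideanSpace ℝ (Fin d) => ‖v - m‖ ^ 2) hIvm2]
    simp only [integral_const, probReal_univ, one_smul]
    exact hV2
  -- key bound 1: quadratic term
  have key1 : ∫ p, γ p.1 p.2 ^ 2 * ‖p.2 - p.1‖ ^ 2 ∂(μ.prod μ) ≤ 2 * V := by
    have hsw : ∫ p, γ p.2 p.1 ^ 2 * ‖p.1 - p.2‖ ^ 2 ∂(μ.prod μ) =
        ∫ p, γ p.1 p.2 ^ 2 * ‖p.2 - p.1‖ ^ 2 ∂(μ.prod μ) :=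
      MeasureTheory.integral_prod_swap (fun p : (EuclideanSpace ℝ (Fin d)) × (EuclideanSpace ℝ (Fin d)) => γ p.1 p.2 ^ 2 * ‖p.2 - p.1‖ ^ 2)
    have hle : ∫ p, (γ p.1 p.2 ^ 2 * ‖p.2 - p.1‖ ^ 2 + γ p.2 p.1 ^ 2 * ‖p.1 - p.2‖ ^ 2)
        ∂(μ.prod μ) ≤ ∫ p, ‖p.2 - p.1‖ ^ 2 ∂(μ.prod μ) := by
      refine integral_mono (hF1.add hF1s) hFW (fun p => ?_)
      have h1 : γ p.1 p.2 ^ 2 + γ p.2 p.1 ^ 2 ≤ 1 := by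
        nlinarith [hγ_sum p.1 p.2, hγ_nn p.1 p.2, hγ_nn p.2 p.1]
      rw [norm_sub_rev p.1 p.2]
      nlinarith [sq_nonneg ‖p.2 - p.1‖]
    rw [integral_add hF1 hF1s, hsw] at hle
    rw [hWval] at hle
    linarith
  -- key bound 2: cross term
  have hA0 : ∫ p, γ p.1 p.2 * (inner ℝ (p.1 - m) (p.2 - m) : ℝ) ∂(μ.prod μ) = 0 := by
    have hsw : ∫ p, γ p.2 p.1 * (inner ℝ (p.2 - m) (p.1 - m) : ℝ) ∂(μ.prod μ) =
        ∫ p, γ p.1 p.2 * (inner ℝ (p.1 - m) (p.2 - m) : ℝ) ∂(μ.prod μ) :=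
      MeasureTheory.integral_prod_swap
        (fun p : (EuclideanSpace ℝ (Fin d)) × (EuclideanSpace ℝ (Fin d)) => γ p.1 p.2 * (inner ℝ (p.1 - m) (p.2 - m) : ℝ))
    have hsum : ∫ p, (γ p.1 p.2 * (inner ℝ (p.1 - m) (p.2 - m) : ℝ) +
        γ p.2 p.1 * (inner ℝ (p.2 - m) (p.1 - m) : ℝ)) ∂(μ.prod μ) =
        ∫ p, (inner ℝ (p.1 - m) (p.2 - m) : ℝ) ∂(μ.prod μ) := by
      refine integral_congr_ae (Filter.Eventually.of_forall fun p => ?_)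
      beta_reduce
      have hAB := real_inner_comm (p.1 - m) (p.2 - m)
      linear_combination (inner ℝ (p.1 - m) (p.2 - m) : ℝ) * hγ_sum p.1 p.2 +
        γ p.2 p.1 * hAB
    have hz : ∫ p, (inner ℝ (p.1 - m) (p.2 - m) : ℝ) ∂(μ.prod μ) = 0 := by
      rw [← integral_integral (f := fun v w : EuclideanSpace ℝ (Fin d) => (inner ℝ (v - m) (w - m) : ℝ)) hInner]
      have : ∀ v : (EuclideanSpace ℝ (Fin d)), ∫ w, (inner ℝ (v - m) (w - m) : ℝ) ∂μ = 0 := by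
        intro v
        rw [integral_inner hsubm, hE0, inner_zero_right]
      simp_rw [this]
      exact integral_zero _ _
    rw [integral_add hFA hFAs, hsw, hz] at hsum
    linarith
  have hBlow : 1 / (1 + C) * (2 * V) ≤ ∫ p, γ p.1 p.2 * ‖p.1 - m‖ ^ 2 ∂(μ.prod μ) := by
    have h := integral_mono (hIvm2.const_mul (1 / (1 + C))) hFB (fun p => by
      exact mul_le_mul_of_nonneg_right (hγ_lb p.1 p.2) (by positivity))
    rw [integral_const_mul, hprod_vm2] at h
    exact h
  have key2 : ∫ p, γ p.1 p.2 * (inner ℝ (p.1 - m) (p.2 - p.1) : ℝ) ∂(μ.prod μ) ≤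
      -(1 / (1 + C) * (2 * V)) := by
    have hsplit : ∫ p, γ p.1 p.2 * (inner ℝ (p.1 - m) (p.2 - p.1) : ℝ) ∂(μ.prod μ) =
        (∫ p, γ p.1 p.2 * (inner ℝ (p.1 - m) (p.2 - m) : ℝ) ∂(μ.prod μ)) -
        ∫ p, γ p.1 p.2 * ‖p.1 - m‖ ^ 2 ∂(μ.prod μ) := by
      rw [← integral_sub hFA hFB]
      refine integral_congr_ae (Filter.Eventually.of_forall fun p => ?_)
      beta_reduce
      have h : p.2 - p.1 = (p.2 - m) - (p.1 - m) := by abel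
      rw [h, inner_sub_right, real_inner_self_eq_norm_sq]
      ring
    rw [hsplit, hA0]
    linarith
  constructor
  · -- main inequality
    rw [integral_integral (f := fun v w : EuclideanSpace ℝ (Fin d) => γ v w ^ 2 * ‖w - v‖ ^ 2) hF1,
      integral_integral (f := fun v w : EuclideanSpace ℝ (Fin d) => γ v w * (inner ℝ (v - m) (w - v) : ℝ)) hF2]
    have h3eq : ∫ v, ∫ w, γ v w ^ 2 * ‖v - w‖ ^ 2 ∂μ ∂μ =
        ∫ p, γ p.1 p.2 ^ 2 * ‖p.2 - p.1‖ ^ 2 ∂(μ.prod μ) := by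
      have hcong : (fun p : (EuclideanSpace ℝ (Fin d)) × (EuclideanSpace ℝ (Fin d)) => γ p.1 p.2 ^ 2 * ‖p.1 - p.2‖ ^ 2) =
          fun p : (EuclideanSpace ℝ (Fin d)) × (EuclideanSpace ℝ (Fin d)) => γ p.1 p.2 ^ 2 * ‖p.2 - p.1‖ ^ 2 := by
        funext p; rw [norm_sub_rev]
      have hF3 : Integrable (fun p : (EuclideanSpace ℝ (Fin d)) × (EuclideanSpace ℝ (Fin d)) => γ p.1 p.2 ^ 2 * ‖p.1 - p.2‖ ^ 2) (μ.prod μ) := by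
        rw [hcong]; exact hF1
      rw [integral_integral (f := fun v w : EuclideanSpace ℝ (Fin d) => γ v w ^ 2 * ‖v - w‖ ^ 2) hF3]
      exact congrArg _ hcong
    rw [h3eq]
    have h_frac : lam / C * V ≤ lam * (1 / (1 + C) * (2 * V)) := by
      have h1 : lam / C ≤ 2 * lam / (1 + C) := by
        rw [div_le_div_iff₀ hC0 (by linarith)]
        nlinarith
      have h2 : lam / C * V ≤ 2 * lam / (1 + C) * V :=
        mul_le_mul_of_nonneg_right h1 hV0
      have h3 : 2 * lam / (1 + C) * V = lam * (1 / (1 + C) * (2 * V)) := by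
        field_simp
      linarith
    have hq1 : lam ^ 2 / 2 * (∫ p, γ p.1 p.2 ^ 2 * ‖p.2 - p.1‖ ^ 2 ∂(μ.prod μ)) ≤
        lam ^ 2 / 2 * (2 * V) :=
      mul_le_mul_of_nonneg_left key1 (by positivity)
    have hq3 : sig ^ 2 * kap / 2 * (∫ p, γ p.1 p.2 ^ 2 * ‖p.2 - p.1‖ ^ 2 ∂(μ.prod μ)) ≤
        sig ^ 2 * kap / 2 * (2 * V) :=
      mul_le_mul_of_nonneg_left key1 (by positivity)
    have hc : lam * (∫ p, γ p.1 p.2 * (inner ℝ (p.1 - m) (p.2 - p.1) : ℝ) ∂(μ.prod μ)) ≤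
        lam * (-(1 / (1 + C) * (2 * V))) :=
      mul_le_mul_of_nonneg_left key2 hlam
    have hextra : (0:ℝ) ≤ sig ^ 2 * kap * V := by positivity
    nlinarith
  · -- strict negativity
    intro hσc hVpos
    rcases eq_or_lt_of_le hkap with hk0 | hk0
    · exfalso
      rw [← hk0] at hσc
      norm_num at hσc
      nlinarith [sq_nonneg sig]
    · have h2k : (0:ℝ) < 2 * kap := by linarith
      have hmul : sig ^ 2 * (2 * kap) < lam * (1 / C - lam) := by
        have h := mul_lt_mul_of_pos_right hσc h2k
        have heq : lam / (2 * kap) * (1 / C - lam) * (2 * kap) = lam * (1 / C - lam) := by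
          field_simp
        linarith [h.trans_eq heq]
      have hcoef : 0 < lam / C - lam ^ 2 - 2 * sig ^ 2 * kap := by
        have : lam * (1 / C - lam) = lam / C - lam ^ 2 := by
          field_simp
        nlinarith
      nlinarith [mul_pos hcoef hVpos]
end

section
/- Jensen-type bound for the macroscopic collective estimate: for every α > 0, ‖v_{α,𝓔}(μ) − m‖² ≤ (C_{α,𝓔} − 1) ∫ ‖v − m‖² dμ(v), where C_{α,𝓔} := exp(α(𝓔̄ − 𝓔̲)). -/
open MeasureTheory

/-- Jensen-type bound for the macroscopic collective estimate:
`‖v_{α,𝓔}(μ) - m‖² ≤ (C_{α,𝓔} - 1) ∫ ‖v - m‖² dμ`. -/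
theorem macroscopic_estimate_jensen_bound {d : ℕ} (hd : 1 ≤ d)
    (μ : Measure (EuclideanSpace ℝ (Fin d))) [IsProbabilityMeasure μ]
    (𝓔 : EuclideanSpace ℝ (Fin d) → ℝ) (h𝓔 : Measurable 𝓔)
    (hbA : BddAbove (Set.range 𝓔)) (hbB : BddBelow (Set.range 𝓔))
    (hmom : Integrable (fun v => ‖v‖ ^ 2) μ)
    (α : ℝ) (hα : 0 < α) :
    let m := ∫ v, v ∂μ
    let vα := (∫ v, Real.exp (-α * 𝓔 v) ∂μ)⁻¹ • ∫ v, Real.exp (-α * 𝓔 v) • v ∂μ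
    let C := Real.exp (α * (sSup (Set.range 𝓔) - sInf (Set.range 𝓔)))
    ‖vα - m‖ ^ 2 ≤ (C - 1) * ∫ v, ‖v - m‖ ^ 2 ∂μ := by
  intro m vα C
  have hm : m = ∫ v, v ∂μ := rfl
  set B := sSup (Set.range 𝓔) with hBdef
  set b := sInf (Set.range 𝓔) with hbdef
  have hle : ∀ v, b ≤ 𝓔 v := fun v => csInf_le hbB ⟨v, rfl⟩
  have hge : ∀ v, 𝓔 v ≤ B := fun v => le_csSup hbA ⟨v, rfl⟩
  have hbB' : b ≤ B := (hle (Classical.arbitrary _)).trans (hge _)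
  set g : EuclideanSpace ℝ (Fin d) → ℝ := fun v => Real.exp (-α * 𝓔 v) with hgdef
  have hg_meas : Measurable g := (h𝓔.const_mul (-α)).exp
  have hg_lb : ∀ v, Real.exp (-α * B) ≤ g v := fun v =>
    Real.exp_le_exp.2 (by nlinarith [hge v])
  have hg_ub : ∀ v, g v ≤ Real.exp (-α * b) := fun v =>
    Real.exp_le_exp.2 (by nlinarith [hle v])
  have hg_pos : ∀ v, 0 < g v := fun v => Real.exp_pos _
  have hg_int : Integrable g μ := by
    refine (integrable_const (Real.exp (-α * b))).mono'
      hg_meas.aestronglyMeasurable (ae_of_all _ fun v => ?_)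
    rw [Real.norm_of_nonneg (hg_pos v).le]
    exact hg_ub v
  set Z := ∫ v, g v ∂μ with hZdef
  have hZ_lb : Real.exp (-α * B) ≤ Z := by
    calc Real.exp (-α * B) = ∫ _, Real.exp (-α * B) ∂μ := by simp
    _ ≤ Z := integral_mono (integrable_const _) hg_int hg_lb
  have hZ_pos : 0 < Z := lt_of_lt_of_le (Real.exp_pos _) hZ_lb
  -- integrability of the identity
  have hmaj : Integrable (fun v : EuclideanSpace ℝ (Fin d) => 1 + ‖v‖ ^ 2) μ := by
    exact (integrable_const 1).add hmom
  have hid : Integrable (fun v : EuclideanSpace ℝ (Fin d) => v) μ := by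
    refine hmaj.mono' measurable_id.aestronglyMeasurable (ae_of_all _ fun v => ?_)
    show ‖v‖ ≤ 1 + ‖v‖ ^ 2
    nlinarith [sq_nonneg (‖v‖ - 1), norm_nonneg v]
  have hg_memtop : MemLp g ⊤ μ :=
    memLp_top_of_bound hg_meas.aestronglyMeasurable (Real.exp (-α * b))
      (ae_of_all _ fun v => by rw [Real.norm_of_nonneg (hg_pos v).le]; exact hg_ub v)
  have hgv_int : Integrable (fun v => g v • v) μ := hid.smul_of_top_right hg_memtop
  have hvm_int : Integrable (fun v => v - m) μ := hid.sub (integrable_const m)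
  have hnvm2_meas : AEStronglyMeasurable (fun v => ‖v - m‖ ^ 2) μ := by
    exact hvm_int.aestronglyMeasurable.norm.pow 2
  have hnvm2_int : Integrable (fun v => ‖v - m‖ ^ 2) μ := by
    have hmaj2 : Integrable (fun v => ‖v‖ ^ 2 + 2 * ‖m‖ * ‖v‖ + ‖m‖ ^ 2) μ := by
      exact (hmom.add (hid.norm.const_mul (2 * ‖m‖))).add (integrable_const _)
    refine hmaj2.mono' hnvm2_meas (ae_of_all _ fun v => ?_)
    show ‖‖v - m‖ ^ 2‖ ≤ ‖v‖ ^ 2 + 2 * ‖m‖ * ‖v‖ + ‖m‖ ^ 2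
    rw [Real.norm_of_nonneg (by positivity)]
    have := norm_sub_le v m
    nlinarith [norm_nonneg (v - m), norm_nonneg v, norm_nonneg m]
  set w : EuclideanSpace ℝ (Fin d) → ℝ := fun v => g v - Real.exp (-α * B) with hwdef
  have hw_nonneg : ∀ v, 0 ≤ w v := fun v => sub_nonneg.2 (hg_lb v)
  have hw_int : Integrable w μ := hg_int.sub (integrable_const _)
  have hw_meas : Measurable w := hg_meas.sub measurable_const
  have hw_memtop : MemLp w ⊤ μ := hg_memtop.sub (memLp_top_const _)
  have hwvm_int : Integrable (fun v => w v • (v - m)) μ := by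
    exact hvm_int.smul_of_top_right hw_memtop
  -- the key identity
  have key : vα - m = Z⁻¹ • ∫ v, w v • (v - m) ∂μ := by
    have iA : Integrable (fun v => g v • (v - m)) μ := by
      exact hvm_int.smul_of_top_right hg_memtop
    have iB : Integrable (fun v => Real.exp (-α * B) • (v - m)) μ := by
      exact hvm_int.smul_of_top_right (memLp_top_const (μ := μ) (Real.exp (-α * B)))
    have e0 : ∫ v, w v • (v - m) ∂μ
        = (∫ v, g v • (v - m) ∂μ) - ∫ v, Real.exp (-α * B) • (v - m) ∂μ := by
      rw [← integral_sub iA iB]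
      exact integral_congr_ae (ae_of_all _ fun v => sub_smul _ _ _)
    have e1 : ∫ v, Real.exp (-α * B) • (v - m) ∂μ = 0 := by
      rw [integral_smul, integral_sub hid (integrable_const m), integral_const]
      simp only [measure_univ, probReal_univ, ENNReal.toReal_one, one_smul, ← hm, sub_self, smul_zero]
    have e2 : ∫ v, g v • (v - m) ∂μ = (∫ v, g v • v ∂μ) - Z • m := by
      have hc : (fun v => g v • (v - m)) = fun v => g v • v - g v • m := by
        funext v; exact smul_sub _ _ _
      rw [hc, integral_sub hgv_int (by exact hg_int.smul_const m), integral_smul_const]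
    rw [e0, e1, e2, sub_zero, smul_sub, smul_smul, inv_mul_cancel₀ hZ_pos.ne', one_smul]
  -- norm bound
  have step1 : ‖vα - m‖ ≤ Z⁻¹ * ∫ v, w v * ‖v - m‖ ∂μ := by
    rw [key, norm_smul, Real.norm_of_nonneg (inv_nonneg.2 hZ_pos.le)]
    refine mul_le_mul_of_nonneg_left ?_ (inv_nonneg.2 hZ_pos.le)
    refine (norm_integral_le_integral_norm _).trans (le_of_eq (integral_congr_ae ?_))
    refine ae_of_all _ fun v => ?_
    show ‖w v • (v - m)‖ = w v * ‖v - m‖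
    rw [norm_smul, Real.norm_of_nonneg (hw_nonneg v)]
  -- Cauchy–Schwarz
  set W := Real.exp (-α * b) - Real.exp (-α * B) with hWdef
  have hw_ub : ∀ v, w v ≤ W := fun v => sub_le_sub_right (hg_ub v) _
  have hW_nonneg : 0 ≤ W := sub_nonneg.2 (Real.exp_le_exp.2 (by nlinarith))
  have hwi2 : Integrable (fun v => w v * ‖v - m‖ ^ 2) μ := by
    exact hnvm2_int.smul_of_top_right hw_memtop
  have cs : ∫ v, w v * ‖v - m‖ ∂μ
      ≤ (∫ v, w v ∂μ) ^ ((1:ℝ)/2) * (∫ v, w v * ‖v - m‖ ^ 2 ∂μ) ^ ((1:ℝ)/2) := by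
    have hpq : Real.HolderConjugate 2 2 := Real.HolderConjugate.two_two
    have hsq_meas : Measurable fun v => Real.sqrt (w v) :=
      hw_meas.sqrt
    have hf : MemLp (fun v => Real.sqrt (w v)) (ENNReal.ofReal 2) μ := by
      rw [show ENNReal.ofReal 2 = 2 by norm_num]
      refine MemLp.of_bound hsq_meas.aestronglyMeasurable (Real.sqrt W)
        (ae_of_all _ fun v => ?_)
      rw [Real.norm_of_nonneg (Real.sqrt_nonneg _)]
      exact Real.sqrt_le_sqrt (hw_ub v)
    have hgmem : MemLp (fun v => Real.sqrt (w v) * ‖v - m‖) (ENNReal.ofReal 2) μ := by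
      rw [show ENNReal.ofReal 2 = 2 by norm_num]
      have hsm : AEStronglyMeasurable (fun v => Real.sqrt (w v) * ‖v - m‖) μ := by
        exact hsq_meas.aestronglyMeasurable.mul hvm_int.aestronglyMeasurable.norm
      rw [memLp_two_iff_integrable_sq hsm]
      refine hwi2.congr (ae_of_all _ fun v => ?_)
      show w v * ‖v - m‖ ^ 2 = (Real.sqrt (w v) * ‖v - m‖) ^ 2
      rw [mul_pow, Real.sq_sqrt (hw_nonneg v)]
    have hH := integral_mul_le_Lp_mul_Lq_of_nonneg hpq
      (ae_of_all _ fun v => Real.sqrt_nonneg (w v))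
      (ae_of_all _ fun v => mul_nonneg (Real.sqrt_nonneg _) (norm_nonneg _)) hf hgmem
    have heq1 : ∫ v, Real.sqrt (w v) * (Real.sqrt (w v) * ‖v - m‖) ∂μ
        = ∫ v, w v * ‖v - m‖ ∂μ := by
      refine integral_congr_ae (ae_of_all _ fun v => ?_)
      show Real.sqrt (w v) * (Real.sqrt (w v) * ‖v - m‖) = w v * ‖v - m‖
      rw [← mul_assoc, Real.mul_self_sqrt (hw_nonneg v)]
    have heq2 : ∫ v, Real.sqrt (w v) ^ (2:ℝ) ∂μ = ∫ v, w v ∂μ := by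
      refine integral_congr_ae (ae_of_all _ fun v => ?_)
      show Real.sqrt (w v) ^ (2:ℝ) = w v
      rw [Real.rpow_two, Real.sq_sqrt (hw_nonneg v)]
    have heq3 : ∫ v, (Real.sqrt (w v) * ‖v - m‖) ^ (2:ℝ) ∂μ
        = ∫ v, w v * ‖v - m‖ ^ 2 ∂μ := by
      refine integral_congr_ae (ae_of_all _ fun v => ?_)
      show (Real.sqrt (w v) * ‖v - m‖) ^ (2:ℝ) = w v * ‖v - m‖ ^ 2
      rw [Real.rpow_two, mul_pow, Real.sq_sqrt (hw_nonneg v)]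
    rw [heq1, heq2, heq3] at hH
    exact hH
  -- bounds on the two factors
  have hSw : ∫ v, w v ∂μ ≤ Z := by
    refine integral_mono hw_int hg_int fun v => ?_
    have := Real.exp_pos (-α * B)
    show g v - Real.exp (-α * B) ≤ g v
    linarith
  have hSw_nonneg : 0 ≤ ∫ v, w v ∂μ := integral_nonneg hw_nonneg
  set T := ∫ v, ‖v - m‖ ^ 2 ∂μ with hTdef
  have hT_nonneg : 0 ≤ T := integral_nonneg fun v => by positivity
  have hwT : ∫ v, w v * ‖v - m‖ ^ 2 ∂μ ≤ W * T := by
    rw [hTdef, ← integral_const_mul]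
    refine integral_mono hwi2 (hnvm2_int.const_mul W) fun v => ?_
    exact mul_le_mul_of_nonneg_right (hw_ub v) (by positivity)
  have hwT_nonneg : 0 ≤ ∫ v, w v * ‖v - m‖ ^ 2 ∂μ :=
    integral_nonneg fun v => mul_nonneg (hw_nonneg v) (by positivity)
  -- put it together
  have hrhs_nonneg : 0 ≤ ∫ v, w v * ‖v - m‖ ∂μ :=
    integral_nonneg fun v => mul_nonneg (hw_nonneg v) (norm_nonneg _)
  have step2 : ‖vα - m‖ ^ 2 ≤ Z⁻¹ ^ 2 * ((∫ v, w v ∂μ) * (∫ v, w v * ‖v - m‖ ^ 2 ∂μ)) := by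
    have h1 : ‖vα - m‖ ^ 2 ≤ (Z⁻¹ * ∫ v, w v * ‖v - m‖ ∂μ) ^ 2 :=
      pow_le_pow_left₀ (norm_nonneg _) step1 2
    refine h1.trans ?_
    rw [mul_pow]
    refine mul_le_mul_of_nonneg_left ?_ (by positivity)
    calc (∫ v, w v * ‖v - m‖ ∂μ) ^ 2
        ≤ ((∫ v, w v ∂μ) ^ ((1:ℝ)/2) * (∫ v, w v * ‖v - m‖ ^ 2 ∂μ) ^ ((1:ℝ)/2)) ^ 2 :=
          pow_le_pow_left₀ hrhs_nonneg cs 2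
      _ = (∫ v, w v ∂μ) * (∫ v, w v * ‖v - m‖ ^ 2 ∂μ) := by
          rw [mul_pow, ← Real.rpow_natCast ((∫ v, w v ∂μ) ^ ((1:ℝ)/2)) 2,
            ← Real.rpow_natCast ((∫ v, w v * ‖v - m‖ ^ 2 ∂μ) ^ ((1:ℝ)/2)) 2,
            ← Real.rpow_mul hSw_nonneg, ← Real.rpow_mul hwT_nonneg]
          norm_num
  have step3 : ‖vα - m‖ ^ 2 ≤ Z⁻¹ * (W * T) := by
    refine step2.trans ?_
    calc Z⁻¹ ^ 2 * ((∫ v, w v ∂μ) * (∫ v, w v * ‖v - m‖ ^ 2 ∂μ))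
        ≤ Z⁻¹ ^ 2 * (Z * (W * T)) := by
          refine mul_le_mul_of_nonneg_left ?_ (by positivity)
          exact mul_le_mul hSw hwT hwT_nonneg hZ_pos.le
      _ = Z⁻¹ * (W * T) := by
          field_simp
  refine step3.trans ?_
  have hZinv : Z⁻¹ ≤ Real.exp (α * B) := by
    have h := inv_anti₀ (Real.exp_pos (-α * B)) hZ_lb
    rwa [show -α * B = -(α * B) by ring, Real.exp_neg, inv_inv] at h
  have hCval : Real.exp (α * B) * W = C - 1 := by
    rw [hWdef, mul_sub, ← Real.exp_add, ← Real.exp_add]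
    have e1 : α * B + -α * b = α * (B - b) := by ring
    have e2 : α * B + -α * B = 0 := by ring
    rw [e1, e2, Real.exp_zero]
  have hfin : Z⁻¹ * W ≤ C - 1 := by
    rw [← hCval]
    exact mul_le_mul_of_nonneg_right hZinv hW_nonneg
  calc Z⁻¹ * (W * T) = (Z⁻¹ * W) * T := by ring
    _ ≤ (C - 1) * T := mul_le_mul_of_nonneg_right hfin hT_nonneg
end

section
/- Second-moment bound for the macroscopic collective estimate: for every α > 0, ∫ ‖v_{α,𝓔}(μ) − v‖² dμ(v) ≤ C_{α,𝓔} ∫ ‖v − m‖² dμ(v), where C_{α,𝓔} := exp(α(𝓔̄ − 𝓔̲)). -/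
open MeasureTheory

/-- Second-moment bound for the macroscopic collective estimate:
`∫ ‖v_{α,𝓔}(μ) - v‖² dμ(v) ≤ C_{α,𝓔} ∫ ‖v - m‖² dμ(v)`. -/
theorem macroscopic_estimate_second_moment_bound {d : ℕ} (hd : 1 ≤ d)
    (μ : Measure (EuclideanSpace ℝ (Fin d))) [IsProbabilityMeasure μ]
    (𝓔 : EuclideanSpace ℝ (Fin d) → ℝ) (h𝓔 : Measurable 𝓔)
    (hbA : BddAbove (Set.range 𝓔)) (hbB : BddBelow (Set.range 𝓔))
    (hmom : Integrable (fun v => ‖v‖ ^ 2) μ)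
    (α : ℝ) (hα : 0 < α) :
    let m := ∫ v, v ∂μ
    let vα := (∫ v, Real.exp (-α * 𝓔 v) ∂μ)⁻¹ • ∫ v, Real.exp (-α * 𝓔 v) • v ∂μ
    let C := Real.exp (α * (sSup (Set.range 𝓔) - sInf (Set.range 𝓔)))
    (∫ v, ‖vα - v‖ ^ 2 ∂μ) ≤ C * ∫ v, ‖v - m‖ ^ 2 ∂μ := by
  intro m vα C
  set w : EuclideanSpace ℝ (Fin d) → ℝ := fun v => Real.exp (-α * 𝓔 v) with hw
  set E := sSup (Set.range 𝓔) with hE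
  set e := sInf (Set.range 𝓔) with he
  have hle : ∀ v, e ≤ 𝓔 v := fun v => csInf_le hbB (Set.mem_range_self v)
  have hge : ∀ v, 𝓔 v ≤ E := fun v => le_csSup hbA (Set.mem_range_self v)
  have hwpos : ∀ v, 0 < w v := fun v => Real.exp_pos _
  have hwlow : ∀ v, Real.exp (-α * E) ≤ w v := fun v =>
    Real.exp_le_exp.2 (by nlinarith [hge v])
  have hwup : ∀ v, w v ≤ Real.exp (-α * e) := fun v =>
    Real.exp_le_exp.2 (by nlinarith [hle v])
  have hwmeas : Measurable w := Real.measurable_exp.comp (h𝓔.const_mul (-α))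
  have hwint : Integrable w μ :=
    (integrable_const (Real.exp (-α * e))).mono' hwmeas.aestronglyMeasurable
      (ae_of_all _ fun v => by
        rw [Real.norm_eq_abs, abs_of_pos (hwpos v)]; exact hwup v)
  have hnorm_int : Integrable (fun v => ‖v‖) μ :=
    (hmom.add (integrable_const 1)).mono' continuous_norm.aestronglyMeasurable
      (ae_of_all _ fun v => by
        simp only [Real.norm_eq_abs, abs_norm, Pi.add_apply]
        nlinarith [norm_nonneg v])
  have hv_int : Integrable (fun v : EuclideanSpace ℝ (Fin d) => v) μ :=
    hnorm_int.mono' aestronglyMeasurable_id (ae_of_all _ fun v => le_rfl)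
  have hwv_int : Integrable (fun v => w v • v) μ :=
    (hnorm_int.const_mul (Real.exp (-α * e))).mono'
      (hwmeas.aestronglyMeasurable.smul aestronglyMeasurable_id)
      (ae_of_all _ fun v => by
        rw [norm_smul, Real.norm_eq_abs, abs_of_pos (hwpos v)]
        exact mul_le_mul_of_nonneg_right (hwup v) (norm_nonneg v))
  set Z : ℝ := ∫ v, w v ∂μ with hZ
  set I : EuclideanSpace ℝ (Fin d) := ∫ v, w v • v ∂μ with hI
  have hZlow : Real.exp (-α * E) ≤ Z := by
    have := integral_mono (integrable_const (Real.exp (-α * E))) hwint hwlow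
    simpa using this
  have hZpos : 0 < Z := lt_of_lt_of_le (Real.exp_pos _) hZlow
  have hvα : vα = Z⁻¹ • I := rfl
  have hZvα : Z • vα = I := by rw [hvα, smul_inv_smul₀ hZpos.ne']
  -- integrability of squared norms
  have hsq : ∀ c : EuclideanSpace ℝ (Fin d), Integrable (fun v => ‖c - v‖ ^ 2) μ := by
    intro c
    refine (((integrable_const (‖c‖ ^ 2)).add (hnorm_int.const_mul (2 * ‖c‖))).add hmom).mono'
      (((continuous_const.sub continuous_id).norm.pow 2).aestronglyMeasurable)
      (ae_of_all _ fun v => ?_)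
    have h1 : ‖c - v‖ ≤ ‖c‖ + ‖v‖ := norm_sub_le c v
    have := norm_nonneg (c - v)
    simp only [Pi.add_apply]
    rw [Real.norm_eq_abs, abs_of_nonneg (by positivity)]
    nlinarith [norm_nonneg c, norm_nonneg v]
  have hwsq : ∀ c : EuclideanSpace ℝ (Fin d),
      Integrable (fun v => w v * ‖c - v‖ ^ 2) μ := fun c =>
    (hsq c).bdd_mul (c := Real.exp (-α * e)) hwmeas.aestronglyMeasurable
      (ae_of_all _ fun v => by
        rw [Real.norm_eq_abs, abs_of_pos (hwpos v)]; exact hwup v)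
  have hwnsq : Integrable (fun v => w v * ‖v‖ ^ 2) μ :=
    hmom.bdd_mul (c := Real.exp (-α * e)) hwmeas.aestronglyMeasurable
      (ae_of_all _ fun v => by
        rw [Real.norm_eq_abs, abs_of_pos (hwpos v)]; exact hwup v)
  -- expansion of the weighted quadratic
  have hexp : ∀ c : EuclideanSpace ℝ (Fin d),
      ∫ v, w v * ‖c - v‖ ^ 2 ∂μ =
        ‖c‖ ^ 2 * Z - 2 * (inner ℝ c I : ℝ) + ∫ v, w v * ‖v‖ ^ 2 ∂μ := by
    intro c
    have h1 : (fun v => w v * ‖c - v‖ ^ 2) =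
        fun v => ‖c‖ ^ 2 * w v - 2 * (inner ℝ c (w v • v) : ℝ) + w v * ‖v‖ ^ 2 := by
      funext v
      rw [norm_sub_sq_real, real_inner_smul_right]
      ring
    rw [h1]
    have hinn : Integrable (fun v => (inner ℝ c (w v • v) : ℝ)) μ := hwv_int.const_inner c
    have ia : Integrable (fun v => ‖c‖ ^ 2 * w v - 2 * (inner ℝ c (w v • v) : ℝ)) μ :=
      (hwint.const_mul _).sub (hinn.const_mul 2)
    have ib : Integrable (fun v => ‖c‖ ^ 2 * w v) μ := hwint.const_mul _
    have ic : Integrable (fun v => 2 * (inner ℝ c (w v • v) : ℝ)) μ := hinn.const_mul 2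
    rw [integral_add ia hwnsq, integral_sub ib ic,
      integral_const_mul, integral_const_mul, integral_inner hwv_int]
  -- Step A : unweighted ≤ exp(αE) * weighted
  have stepA : (∫ v, ‖vα - v‖ ^ 2 ∂μ) ≤
      Real.exp (α * E) * ∫ v, w v * ‖vα - v‖ ^ 2 ∂μ := by
    rw [← integral_const_mul]
    refine integral_mono (hsq vα) ((hwsq vα).const_mul _) fun v => ?_
    have h1 : (1 : ℝ) ≤ Real.exp (α * E) * w v := by
      have := mul_le_mul_of_nonneg_left (hwlow v) (Real.exp_pos (α * E)).le
      rwa [← Real.exp_add, neg_mul, add_neg_cancel, Real.exp_zero] at this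
    have h2 : (0 : ℝ) ≤ ‖vα - v‖ ^ 2 := by positivity
    calc ‖vα - v‖ ^ 2 = 1 * ‖vα - v‖ ^ 2 := (one_mul _).symm
      _ ≤ Real.exp (α * E) * w v * ‖vα - v‖ ^ 2 := mul_le_mul_of_nonneg_right h1 h2
      _ = Real.exp (α * E) * (w v * ‖vα - v‖ ^ 2) := by ring
  -- Step B : weighted minimality
  have stepB : (∫ v, w v * ‖vα - v‖ ^ 2 ∂μ) ≤ ∫ v, w v * ‖m - v‖ ^ 2 ∂μ := by
    rw [hexp vα, hexp m]
    have hIvα : (inner ℝ vα I : ℝ) = Z * ‖vα‖ ^ 2 := by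
      rw [← hZvα, real_inner_smul_right, real_inner_self_eq_norm_sq]
    have hIm : (inner ℝ m I : ℝ) = Z * (inner ℝ m vα : ℝ) := by
      rw [← hZvα, real_inner_smul_right]
    rw [hIvα, hIm]
    have key := norm_sub_sq_real m vα
    nlinarith [sq_nonneg ‖m - vα‖, hZpos.le, sq_nonneg ‖m - vα‖ ]
  -- Step C : weighted ≤ exp(-αe) * unweighted
  have stepC : (∫ v, w v * ‖m - v‖ ^ 2 ∂μ) ≤
      Real.exp (-α * e) * ∫ v, ‖v - m‖ ^ 2 ∂μ := by
    have hmv : (fun v : EuclideanSpace ℝ (Fin d) => ‖v - m‖ ^ 2) =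
        fun v => ‖m - v‖ ^ 2 := by
      funext v; rw [norm_sub_rev]
    rw [hmv, ← integral_const_mul]
    refine integral_mono (hwsq m) ((hsq m).const_mul _) fun v => ?_
    exact mul_le_mul_of_nonneg_right (hwup v) (by positivity)
  have hCsplit : C = Real.exp (α * E) * Real.exp (-α * e) := by
    rw [show C = Real.exp (α * (E - e)) from rfl, ← Real.exp_add]
    congr 1
    ring
  calc (∫ v, ‖vα - v‖ ^ 2 ∂μ)
      ≤ Real.exp (α * E) * ∫ v, w v * ‖vα - v‖ ^ 2 ∂μ := stepA
    _ ≤ Real.exp (α * E) * ∫ v, w v * ‖m - v‖ ^ 2 ∂μ :=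
        mul_le_mul_of_nonneg_left stepB (Real.exp_pos _).le
    _ ≤ Real.exp (α * E) * (Real.exp (-α * e) * ∫ v, ‖v - m‖ ^ 2 ∂μ) :=
        mul_le_mul_of_nonneg_left stepC (Real.exp_pos _).le
    _ = C * ∫ v, ‖v - m‖ ^ 2 ∂μ := by rw [hCsplit]; ring
end

section
/- Core inequality of Proposition 3.2 (macroscopic best estimate only): for every α > 0 and λ, σ, κ ≥ 0, (λ²/2) ∫ ‖v_{α,𝓔}(μ) − v‖² dμ(v) + λ ∫ ⟨v − m, v_{α,𝓔}(μ) − v⟩ dμ(v) + (σ²κ/2) ∫ ‖v_{α,𝓔}(μ) − v‖² dμ(v) ≤ −( 2λ − λ² C_{α,𝓔} − σ²κ C_{α,𝓔} ) V, where C_{α,𝓔} := exp(α(𝓔̄ − 𝓔̲)). Consequently, if σ² < (λ/κ)(2/C_{α,𝓔} − λ), the right-hand side is strictly negative whenever V > 0. -/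
open MeasureTheory
set_option maxHeartbeats 1000000

/-- Core inequality of Proposition 3.2 (macroscopic best estimate only): the sum of the
quadratic term, the cross term and the diffusion term is bounded by
`-(2λ - λ² C_{α,𝓔} - σ²κ C_{α,𝓔}) V`; moreover under `σ² < (λ/κ)(2/C_{α,𝓔} - λ)` this
bound is strictly negative whenever `V > 0`. -/
theorem core_inequality_macroscopic {d : ℕ} (hd : 1 ≤ d)
    (μ : Measure (EuclideanSpace ℝ (Fin d))) [IsProbabilityMeasure μ]
    (𝓔 : EuclideanSpace ℝ (Fin d) → ℝ) (h𝓔 : Measurable 𝓔)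
    (hbA : BddAbove (Set.range 𝓔)) (hbB : BddBelow (Set.range 𝓔))
    (hmom : Integrable (fun v => ‖v‖ ^ 2) μ)
    (α : ℝ) (hα : 0 < α)
    (lam sig kap : ℝ) (hlam : 0 ≤ lam) (hsig : 0 ≤ sig) (hkap : 0 ≤ kap) :
    let m := ∫ v, v ∂μ
    let vα := (∫ v, Real.exp (-α * 𝓔 v) ∂μ)⁻¹ • ∫ v, Real.exp (-α * 𝓔 v) • v ∂μ
    let V := (1 / 2 : ℝ) * ∫ v, ‖v - m‖ ^ 2 ∂μ
    let C := Real.exp (α * (sSup (Set.range 𝓔) - sInf (Set.range 𝓔)))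
    (lam ^ 2 / 2) * (∫ v, ‖vα - v‖ ^ 2 ∂μ) +
      lam * (∫ v, (inner ℝ (v - m) (vα - v) : ℝ) ∂μ) +
      (sig ^ 2 * kap / 2) * (∫ v, ‖vα - v‖ ^ 2 ∂μ) ≤
      -(2 * lam - lam ^ 2 * C - sig ^ 2 * kap * C) * V ∧
    (sig ^ 2 < lam / kap * (2 / C - lam) → 0 < V →
      -(2 * lam - lam ^ 2 * C - sig ^ 2 * kap * C) * V < 0) := by
  intro m vα V C
  have hEi : ∀ v, sInf (Set.range 𝓔) ≤ 𝓔 v := fun v => csInf_le hbB ⟨v, rfl⟩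
  have hEs : ∀ v, 𝓔 v ≤ sSup (Set.range 𝓔) := fun v => le_csSup hbA ⟨v, rfl⟩
  set ω : EuclideanSpace ℝ (Fin d) → ℝ := fun v => Real.exp (-α * 𝓔 v) with hω_def
  set L := Real.exp (-α * sSup (Set.range 𝓔)) with hL_def
  set M := Real.exp (-α * sInf (Set.range 𝓔)) with hM_def
  have hL : 0 < L := Real.exp_pos _
  have hM : 0 < M := Real.exp_pos _
  have hωL : ∀ v, L ≤ ω v := fun v =>
    Real.exp_le_exp.2 (by nlinarith [hEs v, hα.le])
  have hωM : ∀ v, ω v ≤ M := fun v =>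
    Real.exp_le_exp.2 (by nlinarith [hEi v, hα.le])
  have hω0 : ∀ v, 0 < ω v := fun v => Real.exp_pos _
  have hC : C = M / L := by
    rw [hM_def, hL_def, ← Real.exp_sub]
    show Real.exp _ = _
    ring_nf
  have hC0 : 0 < C := Real.exp_pos _
  -- measurability / integrability
  have hω_meas : Measurable ω := Real.measurable_exp.comp (h𝓔.const_mul (-α))
  have hv2 : MemLp (fun v : EuclideanSpace ℝ (Fin d) => v) 2 μ :=
    (memLp_two_iff_integrable_sq_norm aestronglyMeasurable_id).2 hmom
  have hv1 : Integrable (fun v : EuclideanSpace ℝ (Fin d) => v) μ :=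
    hv2.integrable (by norm_num)
  have hω_int : Integrable ω μ := by
    refine (integrable_const M).mono' hω_meas.aestronglyMeasurable ?_
    filter_upwards with v
    rw [Real.norm_eq_abs, abs_of_pos (hω0 v)]; exact hωM v
  have hωv_int : Integrable (fun v => ω v • v) μ := by
    refine (hv1.norm.const_mul M).mono' (hω_meas.aestronglyMeasurable.smul hv1.1) ?_
    filter_upwards with v
    rw [norm_smul, Real.norm_eq_abs, abs_of_pos (hω0 v)]
    exact mul_le_mul_of_nonneg_right (hωM v) (norm_nonneg v)
  have hsub2 : MemLp (fun v : EuclideanSpace ℝ (Fin d) => v - m) 2 μ :=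
    hv2.sub (memLp_const m)
  have hsub1 : Integrable (fun v : EuclideanSpace ℝ (Fin d) => v - m) μ :=
    hv1.sub (integrable_const m)
  have hvm2_int : Integrable (fun v => ‖v - m‖ ^ 2) μ :=
    (memLp_two_iff_integrable_sq_norm hsub2.1).1 hsub2
  have hαv2 : MemLp (fun v : EuclideanSpace ℝ (Fin d) => vα - v) 2 μ :=
    (memLp_const vα).sub hv2
  have hαv1 : Integrable (fun v : EuclideanSpace ℝ (Fin d) => vα - v) μ :=
    (integrable_const vα).sub hv1
  have hαv2_int : Integrable (fun v => ‖vα - v‖ ^ 2) μ :=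
    (memLp_two_iff_integrable_sq_norm hαv2.1).1 hαv2
  -- s = ∫ ω
  set s := ∫ v, ω v ∂μ with hs_def
  have hLs : L ≤ s := by
    have := integral_mono (integrable_const L) hω_int hωL
    simpa using this
  have hs0 : 0 < s := lt_of_lt_of_le hL hLs
  have hvα : vα = s⁻¹ • ∫ v, ω v • v ∂μ := rfl
  have hsvα : s • vα = ∫ v, ω v • v ∂μ := by
    rw [hvα, smul_inv_smul₀ hs0.ne']
  -- mean of v - m is 0
  have hm : m = ∫ v, v ∂μ := rfl
  have hmean : (∫ v, (v - m) ∂μ) = 0 := by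
    rw [integral_sub hv1 (integrable_const m), integral_const]
    simp [hm]
  -- cross term
  have hcross : (∫ v, (inner ℝ (v - m) (vα - v) : ℝ) ∂μ) = - ∫ v, ‖v - m‖ ^ 2 ∂μ := by
    have h1 : ∀ v : EuclideanSpace ℝ (Fin d), (inner ℝ (v - m) (vα - v) : ℝ)
        = (inner ℝ (vα - m) (v - m) : ℝ) - ‖v - m‖ ^ 2 := by
      intro v
      have h : vα - v = (vα - m) - (v - m) := by abel
      rw [h, inner_sub_right, real_inner_comm (v - m) (vα - m),
        real_inner_self_eq_norm_sq]
    simp_rw [h1]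
    rw [integral_sub (hsub1.const_inner _) hvm2_int, integral_inner hsub1, hmean,
      inner_zero_right]
    ring
  -- integrability of weighted quadratics
  have hωq_int : Integrable (fun v => ω v * ‖vα - v‖ ^ 2) μ := by
    refine (hαv2_int.const_mul M).mono'
      (hω_meas.aestronglyMeasurable.mul hαv2_int.1) ?_
    filter_upwards with v
    rw [Real.norm_eq_abs, abs_of_nonneg (by positivity)]
    exact mul_le_mul_of_nonneg_right (hωM v) (by positivity)
  have hωm_int : Integrable (fun v => ω v * ‖v - m‖ ^ 2) μ := by
    refine (hvm2_int.const_mul M).mono'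
      (hω_meas.aestronglyMeasurable.mul hvm2_int.1) ?_
    filter_upwards with v
    rw [Real.norm_eq_abs, abs_of_nonneg (by positivity)]
    exact mul_le_mul_of_nonneg_right (hωM v) (by positivity)
  have hstep1 : L * (∫ v, ‖vα - v‖ ^ 2 ∂μ) ≤ ∫ v, ω v * ‖vα - v‖ ^ 2 ∂μ := by
    rw [← integral_const_mul]
    exact integral_mono (hαv2_int.const_mul L) hωq_int
      (fun v => mul_le_mul_of_nonneg_right (hωL v) (by positivity))
  -- step 2
  have hωαv_int : Integrable (fun v => ω v • (vα - v)) μ := by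
    refine (hαv1.norm.const_mul M).mono'
      (hω_meas.aestronglyMeasurable.smul hαv1.1) ?_
    filter_upwards with v
    rw [norm_smul, Real.norm_eq_abs, abs_of_pos (hω0 v)]
    exact mul_le_mul_of_nonneg_right (hωM v) (norm_nonneg _)
  have hωαv0 : (∫ v, ω v • (vα - v) ∂μ) = 0 := by
    have h : ∀ v : EuclideanSpace ℝ (Fin d), ω v • (vα - v) = ω v • vα - ω v • v :=
      fun v => smul_sub _ _ _
    simp_rw [h]
    rw [integral_sub (hω_int.smul_const vα) hωv_int, ← hsvα, integral_smul_const,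
      ← hs_def]
    simp
  have hinner_int : Integrable (fun v => (inner ℝ (m - vα) (ω v • (vα - v)) : ℝ)) μ :=
    hωαv_int.const_inner _
  have hstep2 : (∫ v, ω v * ‖vα - v‖ ^ 2 ∂μ) ≤ ∫ v, ω v * ‖v - m‖ ^ 2 ∂μ := by
    have hexp : ∀ v : EuclideanSpace ℝ (Fin d), ω v * ‖v - m‖ ^ 2 =
        ω v * ‖m - vα‖ ^ 2 + 2 * (inner ℝ (m - vα) (ω v • (vα - v)) : ℝ)
          + ω v * ‖vα - v‖ ^ 2 := by
      intro v
      rw [norm_sub_rev v m, show m - v = (m - vα) + (vα - v) by abel,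
        norm_add_sq_real, real_inner_smul_right]
      ring
    have hint1 : Integrable (fun v => ω v * ‖m - vα‖ ^ 2
        + 2 * (inner ℝ (m - vα) (ω v • (vα - v)) : ℝ)) μ :=
      (hω_int.mul_const _).add (hinner_int.const_mul 2)
    have hnn : 0 ≤ s * ‖m - vα‖ ^ 2 := by positivity
    calc (∫ v, ω v * ‖vα - v‖ ^ 2 ∂μ)
        ≤ s * ‖m - vα‖ ^ 2 + (∫ v, ω v * ‖vα - v‖ ^ 2 ∂μ) := by linarith
      _ = ∫ v, ω v * ‖v - m‖ ^ 2 ∂μ := by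
          simp_rw [hexp]
          rw [integral_add hint1 hωq_int,
            integral_add (hω_int.mul_const _) (hinner_int.const_mul 2),
            integral_mul_const, integral_const_mul, integral_inner hωαv_int, hωαv0,
            inner_zero_right, ← hs_def]
          ring
  have hstep3 : (∫ v, ω v * ‖v - m‖ ^ 2 ∂μ) ≤ M * ∫ v, ‖v - m‖ ^ 2 ∂μ := by
    rw [← integral_const_mul]
    exact integral_mono hωm_int (hvm2_int.const_mul M)
      (fun v => mul_le_mul_of_nonneg_right (hωM v) (by positivity))
  have hI2 : 0 ≤ ∫ v, ‖v - m‖ ^ 2 ∂μ := integral_nonneg (fun v => by positivity)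
  have hQ : (∫ v, ‖vα - v‖ ^ 2 ∂μ) ≤ C * ∫ v, ‖v - m‖ ^ 2 ∂μ := by
    rw [hC, div_mul_eq_mul_div, le_div_iff₀ hL]
    nlinarith [hstep1, hstep2, hstep3]
  have hV : V = (1 / 2 : ℝ) * ∫ v, ‖v - m‖ ^ 2 ∂μ := rfl
  constructor
  · rw [hcross, hV]
    nlinarith [mul_le_mul_of_nonneg_left hQ
      (by positivity : (0:ℝ) ≤ lam ^ 2 / 2 + sig ^ 2 * kap / 2)]
  · intro h1 h2
    rcases eq_or_lt_of_le hkap with hk0 | hk0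
    · rw [← hk0] at h1
      simp at h1
      exact absurd h1 (not_lt.2 (sq_nonneg sig))
    · have h2' : sig ^ 2 * kap < lam * (2 / C - lam) := by
        rw [div_mul_eq_mul_div, lt_div_iff₀ hk0] at h1
        linarith
      have key : sig ^ 2 * kap * C < lam * (2 / C - lam) * C :=
        mul_lt_mul_of_pos_right h2' hC0
      have hid : lam * (2 / C - lam) * C = 2 * lam - lam ^ 2 * C := by
        field_simp
      rw [hid] at key
      nlinarith [mul_pos
        (by linarith : (0:ℝ) < 2 * lam - lam ^ 2 * C - sig ^ 2 * kap * C) h2]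
end
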